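/- arXiv:1503.04129 — 3 statements merged into one kernel-verified Lean document; each statement's English description precedes it below -/
import Mathlib

section
/- If P is a d-polytope in which some vertex v is joined by an edge to every other vertex of P, and the vertex figure P/v is a pyramid, then P itself is a pyramid. -/
open Set

section Prelim

variable {E : Type*} [AddCommGroup E] [Module ℝ E] {F : Type*} [AddCommGroup F] [Module ℝ F]

/-- A polytope is the convex hull of a nonempty finite set of points. -/
def IsPolytope (P : Set E) : Prop :=
  ∃ S : Finset E, S.Nonempty ∧ P = convexHull ℝ (S : Set E)

/-- The dimension of a set: the dimension of its affine hull. -/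
noncomputable def pdim (P : Set E) : ℕ :=
  Module.finrank ℝ (affineSpan ℝ P).direction

/-- The number of vertices (extreme points). -/
noncomputable def numVertices (P : Set E) : ℕ :=
  (P.extremePoints ℝ).ncard

/-- A face of a polytope: a convex extreme subset. -/
def IsFace (P A : Set E) : Prop :=
  IsExtreme ℝ P A ∧ Convex ℝ A

/-- A facet: a face of dimension one less than the polytope. -/
def IsFacet (P A : Set E) : Prop :=
  A.Nonempty ∧ IsFace P A ∧ pdim A + 1 = pdim P

/-- The number of facets. -/
noncomputable def numFacets (P : Set E) : ℕ :=
  {A : Set E | IsFacet P A}.ncard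

/-- A `k`-dimensional simplex: convex hull of `k+1` affinely independent points. -/
def IsSimplex (k : ℕ) (P : Set E) : Prop :=
  ∃ S : Finset E, S.card = k + 1 ∧
    AffineIndependent ℝ (fun x : (S : Set E) => (x : E)) ∧
    P = convexHull ℝ (S : Set E)

/-- A pyramid: convex hull of a polytope together with a point outside its affine hull. -/
def IsPyramid (P : Set E) : Prop :=
  ∃ (Q : Set E) (v : E), IsPolytope Q ∧ v ∉ affineSpan ℝ Q ∧
    P = convexHull ℝ (Q ∪ {v})

/-- The join of two polytopes, realized in skew affine subspaces of `E × F × ℝ`. -/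
def polyJoin (P : Set E) (Q : Set F) : Set (E × F × ℝ) :=
  convexHull ℝ ((fun p => (p, (0 : F), (0 : ℝ))) '' P ∪ (fun q => ((0 : E), q, (1 : ℝ))) '' Q)

/-- Combinatorial equivalence: an inclusion-preserving bijection between the face posets. -/
def CombEquiv (P : Set E) (Q : Set F) : Prop :=
  Nonempty ({A : Set E // IsFace P A} ≃o {B : Set F // IsFace Q B})

end Prelim

section Aux
variable {E : Type*} [AddCommGroup E] [Module ℝ E]

/-- A non-extreme point of the hull of a finite set is in the hull of the rest. -/
lemma mem_convexHull_erase_of_not_extreme [DecidableEq E] (S : Finset E) {s : E} (hs : s ∈ S)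
    (hne : s ∉ (convexHull ℝ (S : Set E)).extremePoints ℝ) :
    s ∈ convexHull ℝ (↑(S.erase s) : Set E) := by
  classical
  have hsP : s ∈ convexHull ℝ (S : Set E) := subset_convexHull ℝ _ (by exact_mod_cast hs)
  rw [mem_extremePoints] at hne
  push_neg at hne
  obtain ⟨x, hx, y, hy, hseg, hxy⟩ := hne hsP
  obtain ⟨t1, t2, ht1, ht2, hts, heq⟩ := hseg
  rw [Finset.convexHull_eq] at hx hy
  obtain ⟨wx, hwx0, hwx1, hwxc⟩ := hx
  obtain ⟨wy, hwy0, hwy1, hwyc⟩ := hy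
  rw [Finset.centerMass_eq_of_sum_1 _ _ hwx1] at hwxc
  rw [Finset.centerMass_eq_of_sum_1 _ _ hwy1] at hwyc
  -- combined weights
  set w : E → ℝ := fun u => t1 * wx u + t2 * wy u with hw
  have hw0 : ∀ u ∈ S, 0 ≤ w u := fun u hu =>
    add_nonneg (mul_nonneg ht1.le (hwx0 u hu)) (mul_nonneg ht2.le (hwy0 u hu))
  have hw1 : ∑ u ∈ S, w u = 1 := by
    simp only [hw, Finset.sum_add_distrib, ← Finset.mul_sum, hwx1, hwy1, mul_one]; linarith
  have hwc : ∑ u ∈ S, w u • u = s := by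
    simp only [hw, add_smul, Finset.sum_add_distrib, mul_smul, ← Finset.smul_sum]
    simp only [id] at hwxc hwyc
    rw [hwxc, hwyc, heq]
  -- an auxiliary fact: full weight at s forces the point to be s
  have key : ∀ w' : E → ℝ, (∀ u ∈ S, 0 ≤ w' u) → ∑ u ∈ S, w' u = 1 → w' s = 1 →
      ∑ u ∈ S, w' u • u = s := by
    intro w' h0 h1 hs1
    rw [← Finset.add_sum_erase _ _ hs, hs1, one_smul]
    have hz : ∑ u ∈ S.erase s, w' u = 0 := by
      rw [← Finset.add_sum_erase _ _ hs, hs1] at h1; linarith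
    have : ∀ u ∈ S.erase s, w' u = 0 := by
      intro u hu
      exact (Finset.sum_eq_zero_iff_of_nonneg
        (fun i hi => h0 i (Finset.mem_of_mem_erase hi))).mp hz u hu
    rw [Finset.sum_eq_zero (fun u hu => by rw [this u hu, zero_smul]), add_zero]
  -- w s < 1
  have hwsle : ∀ (w' : E → ℝ), (∀ u ∈ S, 0 ≤ w' u) → ∑ u ∈ S, w' u = 1 → w' s ≤ 1 := by
    intro w' h0 h1
    rw [← Finset.add_sum_erase _ _ hs] at h1
    have hnn : (0:ℝ) ≤ ∑ x ∈ S.erase s, w' x :=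
      Finset.sum_nonneg fun i hi => h0 i (Finset.mem_of_mem_erase hi)
    linarith
  have hws : w s < 1 := by
    rcases lt_or_eq_of_le (hwsle w hw0 hw1) with h | h
    · exact h
    · exfalso
      have hx1 : wx s = 1 := by
        by_contra hne1
        have h1 : wx s < 1 := lt_of_le_of_ne (hwsle wx hwx0 hwx1) hne1
        have h2 : wy s ≤ 1 := hwsle wy hwy0 hwy1
        have : w s < 1 := by rw [hw]; dsimp only; nlinarith
        linarith
      have hy1 : wy s = 1 := by
        by_contra hne1
        have h1 : wy s < 1 := lt_of_le_of_ne (hwsle wy hwy0 hwy1) hne1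
        have : w s < 1 := by rw [hw]; dsimp only; nlinarith
        linarith
      have hxs : x = s := by rw [← hwxc]; simpa using key wx hwx0 hwx1 hx1
      have hys : y = s := by rw [← hwyc]; simpa using key wy hwy0 hwy1 hy1
      exact hxy hxs hys
  -- renormalize on the erased set
  have hsum' : ∑ u ∈ S.erase s, w u = 1 - w s := by
    rw [← Finset.add_sum_erase _ _ hs] at hw1; linarith
  have hwc' : w s • s + ∑ u ∈ S.erase s, w u • u = s := by
    rw [Finset.add_sum_erase S (fun u => w u • u) hs]; exact hwc
  have hvec : ∑ u ∈ S.erase s, w u • u = (1 - w s) • s := by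
    linear_combination (norm := module) hwc'
  have h1ws : (0:ℝ) < 1 - w s := by linarith
  have hcm : s = (S.erase s).centerMass w id := by
    rw [Finset.centerMass, hsum']
    simp only [id]
    rw [hvec, smul_smul, inv_mul_cancel₀ (ne_of_gt h1ws), one_smul]
  have hmem : (S.erase s).centerMass w id ∈ convexHull ℝ (↑(S.erase s) : Set E) :=
    Finset.centerMass_mem_convexHull _ (fun i hi => hw0 i (Finset.mem_of_mem_erase hi))
      (by rw [hsum']; exact h1ws) (fun i hi => by exact_mod_cast hi)
  rw [← hcm] at hmem
  exact hmem

/-- A polytope is the hull of its extreme points. -/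
lemma convexHull_extremePoints_finset [DecidableEq E] (S : Finset E) :
    convexHull ℝ ((convexHull ℝ (S : Set E)).extremePoints ℝ) = convexHull ℝ (S : Set E) := by
  induction S using Finset.strongInduction with
  | _ S ih =>
    by_cases h : ∀ s ∈ S, s ∈ (convexHull ℝ (S : Set E)).extremePoints ℝ
    · refine le_antisymm (convexHull_min extremePoints_subset (convex_convexHull ℝ _)) ?_
      exact convexHull_min (fun s hsS => subset_convexHull ℝ _ (h s (by exact_mod_cast hsS)))
        (convex_convexHull ℝ _)
    · push_neg at h
      obtain ⟨s, hsS, hse⟩ := h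
      have h1 : s ∈ convexHull ℝ (↑(S.erase s) : Set E) :=
        mem_convexHull_erase_of_not_extreme S hsS hse
      have h2 : convexHull ℝ (↑(S.erase s) : Set E) = convexHull ℝ (S : Set E) := by
        refine le_antisymm (convexHull_mono (by exact_mod_cast Finset.erase_subset s S)) ?_
        refine convexHull_min ?_ (convex_convexHull ℝ _)
        intro u hu
        rcases eq_or_ne u s with rfl | hne
        · exact h1
        · exact subset_convexHull ℝ _ (by
            simp only [Finset.coe_erase, Set.mem_diff, Set.mem_singleton_iff]
            exact ⟨hu, hne⟩)
      rw [← h2]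
      exact ih (S.erase s) (Finset.erase_ssubset hsS)

/-- The apex of a pyramid is an extreme point. -/
lemma apex_extremePoint {Q : Set E} (hQconv : Convex ℝ Q) (hQne : Q.Nonempty) {a : E}
    (haQ : a ∉ affineSpan ℝ Q) :
    a ∈ (convexHull ℝ (Q ∪ {a})).extremePoints ℝ := by
  have hrw : convexHull ℝ (Q ∪ {a}) = convexJoin ℝ {a} Q := by
    rw [Set.union_singleton, convexHull_insert hQne, hQconv.convexHull_eq]
  rw [hrw, mem_extremePoints]
  constructor
  · obtain ⟨q, hq⟩ := hQne
    exact mem_convexJoin.mpr ⟨a, rfl, q, hq, left_mem_segment ℝ a q⟩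
  · rintro x1 hx1 x2 hx2 hseg
    rw [mem_convexJoin] at hx1 hx2
    obtain ⟨a1, ha1, q1, hq1, hxs1⟩ := hx1
    obtain ⟨a2, ha2, q2, hq2, hxs2⟩ := hx2
    rw [mem_singleton_iff] at ha1 ha2
    rw [ha1] at hxs1
    rw [ha2] at hxs2
    obtain ⟨γ1, δ1, hγ1, hδ1, hsum1, heq1⟩ := hxs1
    obtain ⟨γ2, δ2, hγ2, hδ2, hsum2, heq2⟩ := hxs2
    obtain ⟨t1, t2, ht1, ht2, hts, hteq⟩ := hseg
    rcases eq_or_lt_of_le (add_nonneg (mul_nonneg ht1.le hδ1) (mul_nonneg ht2.le hδ2))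
      with hD | hDpos
    · -- degenerate: both coefficients on Q vanish, so x1 = x2 = a
      have hd1 : δ1 = 0 := by nlinarith
      have hd2 : δ2 = 0 := by nlinarith
      have hg1 : γ1 = 1 := by linarith
      have hg2 : γ2 = 1 := by linarith
      constructor
      · rw [← heq1, hd1, hg1]; simp
      · rw [← heq2, hd2, hg2]; simp
    · exfalso
      set D := t1 * δ1 + t2 * δ2 with hDdef
      have hc : t1 * γ1 + t2 * γ2 = 1 - D := by
        rw [hDdef]; linear_combination t1 * hsum1 + t2 * hsum2 + hts
      have h : t1 • (γ1 • a + δ1 • q1) + t2 • (γ2 • a + δ2 • q2) = a := by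
        rw [heq1, heq2]; exact hteq
      have hexp : t1 • (γ1 • a + δ1 • q1) + t2 • (γ2 • a + δ2 • q2) =
          (t1 * γ1 + t2 * γ2) • a + ((t1 * δ1) • q1 + (t2 * δ2) • q2) := by module
      rw [hexp, hc] at h
      have hDa : D • a = (t1 * δ1) • q1 + (t2 * δ2) • q2 := by
        linear_combination (norm := module) -h
      have haqq : a = (t1 * δ1 / D) • q1 + (t2 * δ2 / D) • q2 := by
        rw [eq_comm, div_eq_inv_mul, div_eq_inv_mul, mul_smul D⁻¹ (t1 * δ1) q1,
          mul_smul D⁻¹ (t2 * δ2) q2, ← smul_add, ← hDa,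
          smul_smul, inv_mul_cancel₀ (ne_of_gt hDpos), one_smul]
      have haQ' : a ∈ Q := by
        rw [haqq]
        exact hQconv hq1 hq2 (div_nonneg (mul_nonneg ht1.le hδ1) hDpos.le)
          (div_nonneg (mul_nonneg ht2.le hδ2) hDpos.le)
          (by rw [← add_div, div_self (ne_of_gt hDpos)])
      exact haQ (subset_affineSpan ℝ Q haQ')

end Aux

/-- If a vertex v of a polytope P is joined by an edge to every other vertex
and a vertex figure P/v (a slice by a hyperplane strictly separating v from the other
vertices) is a pyramid, then P is a pyramid. -/
theorem stmt7 {E : Type*} [AddCommGroup E] [Module ℝ E]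
    (P : Set E) (hP : IsPolytope P)
    (v : E) (hv : v ∈ P.extremePoints ℝ)
    (hadj : ∀ w ∈ P.extremePoints ℝ, w ≠ v → IsFace P (segment ℝ v w))
    (f : E →ₗ[ℝ] ℝ) (c : ℝ) (hfv : c < f v)
    (hsep : ∀ w ∈ P.extremePoints ℝ, w ≠ v → f w < c)
    (hfig : IsPyramid (P ∩ {x | f x = c})) :
    IsPyramid P := by
  classical
  obtain ⟨S, hSne, hPS⟩ := hP
  have hPconv : Convex ℝ P := hPS ▸ convex_convexHull ℝ _
  set X := P.extremePoints ℝ with hXdef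
  have hXfin : X.Finite := by
    apply S.finite_toSet.subset
    rw [hXdef, hPS]
    exact extremePoints_convexHull_subset
  have hPX : P = convexHull ℝ X := by
    have h := convexHull_extremePoints_finset (E := E) S
    rw [← hPS] at h
    exact h.symm
  obtain ⟨Q, a, ⟨SQ, hSQne, hQSQ⟩, haQ, hPH⟩ := hfig
  have hQne : Q.Nonempty := by
    rw [hQSQ]; exact (Finset.coe_nonempty.mpr hSQne).convexHull
  have hQconv : Convex ℝ Q := hQSQ ▸ convex_convexHull ℝ _
  have hQsubH : Q ⊆ P ∩ {x | f x = c} := by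
    rw [hPH]; exact (subset_union_left).trans (subset_convexHull ℝ _)
  have haPH : a ∈ P ∩ {x | f x = c} := by
    rw [hPH]; exact subset_convexHull ℝ _ (Or.inr rfl)
  have hfa : f a = c := haPH.2
  set W := X \ {v} with hWdef
  have hWfin : W.Finite := hXfin.diff
  have hWne : W.Nonempty := by
    rcases eq_empty_or_nonempty W with he | hne
    · exfalso
      have hXv : X ⊆ {v} := diff_eq_empty.mp he
      have hPv : P ⊆ {v} := by
        rw [hPX]; exact convexHull_min hXv (convex_singleton v)
      have := hPv haPH.1
      rw [mem_singleton_iff] at this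
      rw [this] at hfa
      exact absurd hfa (ne_of_gt hfv)
    · exact hne
  have hfw : ∀ w ∈ W, f w < c := fun w hw =>
    hsep w hw.1 (fun h => hw.2 (mem_singleton_iff.mpr h))
  set tc : E → ℝ := fun w => (f v - c) / (f v - f w) with htcdef
  set p : E → E := fun w => (1 - tc w) • v + tc w • w with hpdef
  have htc0 : ∀ w ∈ W, 0 < tc w := by
    intro w hw
    have := hfw w hw
    rw [htcdef]
    exact div_pos (by linarith) (by linarith)
  have htc1 : ∀ w ∈ W, tc w < 1 := by
    intro w hw
    have := hfw w hw
    rw [htcdef]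
    rw [div_lt_one (by linarith)]
    linarith
  have htcmul : ∀ w ∈ W, tc w * (f v - f w) = f v - c := by
    intro w hw
    have := hfw w hw
    rw [htcdef]
    exact div_mul_cancel₀ _ (by intro h; simp only [sub_eq_zero] at h; linarith)
  have hfp : ∀ w ∈ W, f (p w) = c := by
    intro w hw
    have h := htcmul w hw
    rw [hpdef]
    simp only [map_add, map_smul, smul_eq_mul]
    linear_combination -h
  have hpseg : ∀ w ∈ W, p w ∈ segment ℝ v w := by
    intro w hw
    exact ⟨1 - tc w, tc w, by linarith [htc1 w hw], (htc0 w hw).le, by ring, rfl⟩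
  have hpP : ∀ w ∈ W, p w ∈ P := fun w hw =>
    hPconv.segment_subset hv.1 hw.1.1 (hpseg w hw)
  -- KEY 1 : the slice is the hull of the edge-crossing points
  have hslice : P ∩ {x | f x = c} = convexHull ℝ (p '' W) := by
    apply subset_antisymm
    · rintro x ⟨hxP, hfx⟩
      simp only [mem_setOf_eq] at hfx
      have hins : insert v W = X := by
        rw [hWdef, Set.insert_diff_singleton, Set.insert_eq_of_mem hv]
      have hxX : x ∈ convexHull ℝ (insert v W) := by
        rw [hins, ← hPX]; exact hxP
      rw [convexHull_insert hWne, mem_convexJoin] at hxX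
      obtain ⟨v', hv', z, hz, hxseg⟩ := hxX
      rw [mem_singleton_iff] at hv'
      rw [hv'] at hxseg
      obtain ⟨α, β, hα, hβ, hαβ, hxeq⟩ := hxseg
      have hfz : f z < c := by
        have hconv : Convex ℝ {y | f y < c} := convex_halfSpace_lt ⟨f.map_add, f.map_smul⟩ c
        exact convexHull_min (fun w hw => hfw w hw) hconv hz
      have hfx' : α * f v + β * f z = c := by
        rw [← hfx, ← hxeq]; simp [map_add, map_smul, smul_eq_mul]
      have hβpos : 0 < β := by
        rcases eq_or_lt_of_le hβ with h | h
        · exfalso; rw [← h] at hfx' hαβ; simp at hfx' hαβ; rw [hαβ] at hfx'; simp at hfx'; linarith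
        · exact h
      set T := hWfin.toFinset with hTdef
      have hmemT : ∀ w ∈ T, w ∈ W := fun w hw => (hWfin.mem_toFinset).mp hw
      have hzT : z ∈ convexHull ℝ (T : Set E) := by rw [hWfin.coe_toFinset]; exact hz
      rw [Finset.convexHull_eq] at hzT
      obtain ⟨μ, hμ0, hμ1, hμc⟩ := hzT
      rw [Finset.centerMass_eq_of_sum_1 _ _ hμ1] at hμc
      simp only [id] at hμc
      set ν : E → ℝ := fun w => β * μ w / tc w with hνdef
      have hν0 : ∀ w ∈ T, 0 ≤ ν w := fun w hw =>
        div_nonneg (mul_nonneg hβ (hμ0 w hw)) (htc0 w (hmemT w hw)).le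
      have hfz' : ∑ w ∈ T, μ w * f w = f z := by
        rw [← hμc]; simp [map_sum, map_smul, smul_eq_mul]
      have hβval : β * (f v - f z) = f v - c := by
        linear_combination (f v) * hαβ - hfx'
      have hν1 : ∑ w ∈ T, ν w = 1 := by
        have hre : ∀ w ∈ T, ν w = β * μ w * (f v - f w) / (f v - c) := by
          intro w hw
          have hWw := hmemT w hw
          have h1 := htcmul w hWw
          have h2 : tc w ≠ 0 := ne_of_gt (htc0 w hWw)
          have hfvc : f v - c ≠ 0 := by intro h; rw [sub_eq_zero] at h; linarith
          rw [hνdef]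
          dsimp only
          rw [div_eq_div_iff h2 hfvc]
          linear_combination (-(β * μ w)) * h1
        rw [Finset.sum_congr rfl hre, ← Finset.sum_div,
          div_eq_one_iff_eq (by intro h; rw [sub_eq_zero] at h; linarith)]
        have hexp : ∀ w ∈ T, β * μ w * (f v - f w) = β * f v * μ w - β * (μ w * f w) :=
          fun w _ => by ring
        rw [Finset.sum_congr rfl hexp, Finset.sum_sub_distrib, ← Finset.mul_sum, ← Finset.mul_sum,
          hμ1, hfz', mul_one]
        linear_combination hβval
      have hterm : ∀ w ∈ T, ν w • p w = (ν w - β * μ w) • v + (β * μ w) • w := by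
        intro w hw
        have h2 : tc w ≠ 0 := ne_of_gt (htc0 w (hmemT w hw))
        have h1 : ν w * tc w = β * μ w := by
          rw [hνdef]; dsimp only; exact div_mul_cancel₀ _ h2
        rw [hpdef]
        dsimp only
        rw [smul_add, smul_smul, smul_smul, h1]
        congr 1
        rw [← h1]
        module
      have hνc : ∑ w ∈ T, ν w • p w = x := by
        rw [Finset.sum_congr rfl hterm, Finset.sum_add_distrib, ← Finset.sum_smul,
          Finset.sum_sub_distrib, hν1, ← Finset.mul_sum, hμ1, mul_one]
        have : ∑ w ∈ T, (β * μ w) • w = β • z := by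
          rw [← hμc, Finset.smul_sum]
          exact Finset.sum_congr rfl fun w _ => by rw [smul_smul]
        rw [this, ← hxeq]
        congr 1
        rw [← hαβ]; module
      have hx' : T.centerMass ν p = x := by
        rw [Finset.centerMass_eq_of_sum_1 _ _ hν1]; exact hνc
      rw [← hx']
      exact Finset.centerMass_mem_convexHull T hν0 (by rw [hν1]; norm_num)
        (fun i hi => mem_image_of_mem p (hmemT i hi))
    · refine convexHull_min ?_ (hPconv.inter (convex_hyperplane ⟨f.map_add, f.map_smul⟩ c))
      rintro _ ⟨w, hw, rfl⟩
      exact ⟨hpP w hw, hfp w hw⟩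
  -- KEY 2 : a is an extreme point of the slice
  have haext : a ∈ (P ∩ {x | f x = c}).extremePoints ℝ := by
    rw [hPH]; exact apex_extremePoint hQconv hQne haQ
  -- KEY 4 : a is one of the crossing points
  have h4 : a ∈ p '' W := by
    have h := haext
    rw [hslice] at h
    exact extremePoints_convexHull_subset h
  obtain ⟨w0, hw0W, hpw0⟩ := h4
  -- KEY 3 : each crossing point is extreme in the slice
  have hpext : ∀ w ∈ W, p w ∈ (P ∩ {x | f x = c}).extremePoints ℝ := by
    intro w hw
    have hwne : w ≠ v := fun h => hw.2 (mem_singleton_iff.mpr h)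
    have hface : IsExtreme ℝ P (segment ℝ v w) := (hadj w hw.1 hwne).1
    have hint : IsExtreme ℝ (P ∩ {x | f x = c}) (segment ℝ v w ∩ {x | f x = c}) := by
      constructor
      · exact inter_subset_inter_left _ hface.1
      · rintro x1 hx1 x2 hx2 x ⟨hxseg, hxH⟩ hopen
        have h1 := hface.2 hx1.1 hx2.1 hxseg hopen
        exact ⟨h1, hx1.2⟩
    have hseg_eq : segment ℝ v w ∩ {x | f x = c} = {p w} := by
      apply subset_antisymm
      · rintro x ⟨⟨α, β, hα, hβ, hαβ, rfl⟩, hfx⟩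
        simp only [mem_setOf_eq, map_add, map_smul, smul_eq_mul] at hfx
        have hβt : β = tc w := by
          have h1 := htcmul w hw
          have hfwlt := hfw w hw
          have hd : f v - f w ≠ 0 := by intro h; simp only [sub_eq_zero] at h; linarith
          have : β * (f v - f w) = f v - c := by linear_combination (f v) * hαβ - hfx
          have h2 : tc w * (f v - f w) = f v - c := h1
          have := this.trans h2.symm
          exact mul_right_cancel₀ hd this
        have hαt : α = 1 - tc w := by rw [← hβt]; linarith
        rw [mem_singleton_iff, hpdef]
        dsimp only
        rw [hαt, hβt]
      · rintro x hx
        rw [mem_singleton_iff] at hx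
        rw [hx]
        exact ⟨hpseg w hw, hfp w hw⟩
    rw [hseg_eq] at hint
    exact isExtreme_singleton.mp hint
  -- KEY 5 : injectivity of the crossing map
  have haux : ∀ w ∈ W, ∀ w' ∈ W, p w = p w' → tc w' ≤ tc w → w = w' := by
    intro w hw w' hw' hpp hle
    rcases eq_or_lt_of_le hle with heq | hlt
    · have hpp' : (1 - tc w) • v + tc w • w = (1 - tc w') • v + tc w' • w' := by
        rw [hpdef] at hpp; exact hpp
      rw [← heq] at hpp'
      have := add_left_cancel hpp'
      exact smul_right_injective E (ne_of_gt (htc0 w' hw')) this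
    · exfalso
      have hpp' : (1 - tc w) • v + tc w • w = (1 - tc w') • v + tc w' • w' := by
        rw [hpdef] at hpp; exact hpp
      have h2 : tc w • w = (tc w - tc w') • v + tc w' • w' := by
        linear_combination (norm := module) hpp'
      have hkey : w = ((tc w - tc w') / tc w) • v + (tc w' / tc w) • w' := by
        rw [div_eq_inv_mul, div_eq_inv_mul, mul_smul (tc w)⁻¹ (tc w - tc w') v,
          mul_smul (tc w)⁻¹ (tc w') w', ← smul_add, ← h2, smul_smul,
          inv_mul_cancel₀ (ne_of_gt (htc0 w hw)), one_smul]
      have hwopen : w ∈ openSegment ℝ v w' :=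
        ⟨(tc w - tc w') / tc w, tc w' / tc w, div_pos (by linarith) (htc0 w hw),
          div_pos (htc0 w' hw') (htc0 w hw),
          by rw [← add_div, show tc w - tc w' + tc w' = tc w by ring,
            div_self (ne_of_gt (htc0 w hw))], hkey.symm⟩
      have hvw := (hw.1.2 hv.1 hw'.1.1 hwopen)
      exact hw.2 (mem_singleton_iff.mpr hvw.symm)
  have hinj : ∀ w ∈ W, p w = p w0 → w = w0 := by
    intro w hw hppeq
    rcases le_total (tc w0) (tc w) with h | h
    · exact haux w hw w0 hw0W hppeq h
    · exact (haux w0 hw0W w hw hppeq.symm h).symm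
  have hw0X : w0 ∈ X := hw0W.1
  have hw0v : w0 ≠ v := fun h => hw0W.2 (mem_singleton_iff.mpr h)
  -- C1 : all vertices except w0 lie in the hyperplane spanned by v and Q
  have hC1 : ∀ w ∈ X, w ≠ w0 → w ∈ affineSpan ℝ (insert v Q) := by
    intro w hwX hww0
    rcases eq_or_ne w v with rfl | hwv
    · exact subset_affineSpan ℝ _ (mem_insert _ _)
    · have hwW : w ∈ W := ⟨hwX, fun h => hwv (mem_singleton_iff.mp h)⟩
      have hpQ : p w ∈ Q := by
        have h := hpext w hwW
        rw [hPH] at h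
        rcases extremePoints_convexHull_subset h with hq | ha'
        · exact hq
        · exfalso
          rw [mem_singleton_iff] at ha'
          exact hww0 (hinj w hwW (ha'.trans hpw0.symm))
      have hvmem : v ∈ affineSpan ℝ (insert v Q) := subset_affineSpan ℝ _ (mem_insert _ _)
      have hpmem : p w ∈ affineSpan ℝ (insert v Q) :=
        subset_affineSpan ℝ _ (mem_insert_of_mem _ hpQ)
      have hmem := AffineSubspace.smul_vsub_vadd_mem (affineSpan ℝ (insert v Q)) (tc w)⁻¹
        hpmem hvmem hvmem
      have heqw : (tc w)⁻¹ • (p w -ᵥ v) +ᵥ v = w := by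
        rw [hpdef]
        dsimp only
        rw [vsub_eq_sub, vadd_eq_add]
        have h2 : tc w ≠ 0 := ne_of_gt (htc0 w hwW)
        match_scalars
        · field_simp; ring
        · field_simp
      rwa [heqw] at hmem
  -- C2 : w0 is not in that hyperplane
  have hC2 : w0 ∉ affineSpan ℝ (insert v Q) := by
    intro hmem
    have hvmem : v ∈ affineSpan ℝ (insert v Q) := subset_affineSpan ℝ _ (mem_insert _ _)
    have haspan : a ∈ affineSpan ℝ (insert v Q) := by
      have h := AffineSubspace.smul_vsub_vadd_mem (affineSpan ℝ (insert v Q)) (tc w0)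
        hmem hvmem hvmem
      have heqa : tc w0 • (w0 -ᵥ v) +ᵥ v = a := by
        rw [← hpw0, hpdef]
        dsimp only
        rw [vsub_eq_sub, vadd_eq_add]
        module
      rwa [heqa] at h
    have hle : affineSpan ℝ (insert v Q) ≤
        affineSpan ℝ (insert v ((affineSpan ℝ Q : Set E))) :=
      affineSpan_mono ℝ (insert_subset_insert (subset_affineSpan ℝ Q))
    obtain ⟨q0, hq0⟩ := hQne
    have hq0span : q0 ∈ affineSpan ℝ Q := subset_affineSpan ℝ Q hq0
    obtain ⟨r, p0, hp0, hae⟩ :=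
      (AffineSubspace.mem_affineSpan_insert_iff hq0span v a).mp (hle haspan)
    have hfc : ∀ y ∈ affineSpan ℝ Q, f y = c := by
      intro y hy
      let K : AffineSubspace ℝ E :=
        { carrier := {x | f x = c}
          smul_vsub_vadd_mem' := by
            intro r p1 p2 p3 h1 h2 h3
            simp only [mem_setOf_eq] at h1 h2 h3 ⊢
            rw [vsub_eq_sub, vadd_eq_add]
            simp [map_add, map_sub, map_smul, h1, h2, h3] }
      have hQK : affineSpan ℝ Q ≤ K := affineSpan_le.mpr (fun q hq => (hQsubH hq).2)
      exact hQK hy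
    have hfp0 : f p0 = c := hfc p0 hp0
    have hfq0 : f q0 = c := hfc q0 hq0span
    have hfa' : f a = r * (f v - f q0) + f p0 := by
      rw [hae, vadd_eq_add, vsub_eq_sub]
      simp [map_add, map_sub, map_smul, smul_eq_mul]
    rw [hfa, hfp0, hfq0] at hfa'
    have hr : r = 0 := by
      have hne : f v - c ≠ 0 := by intro h; rw [sub_eq_zero] at h; linarith
      have : r * (f v - c) = 0 := by linarith
      exact (mul_eq_zero.mp this).resolve_right hne
    rw [hr] at hae
    simp only [zero_smul, zero_vadd] at hae
    rw [hae] at haQ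
    exact haQ hp0
  -- final assembly
  have hBfin : (X \ {w0}).Finite := hXfin.diff
  refine ⟨convexHull ℝ (X \ {w0}), w0,
    ⟨hBfin.toFinset, ?_, by rw [hBfin.coe_toFinset]⟩, ?_, ?_⟩
  · rw [Set.Finite.toFinset_nonempty]
    exact ⟨v, hv, fun h => hw0v (mem_singleton_iff.mp h).symm⟩
  · rw [affineSpan_convexHull]
    intro hmem
    have hle : affineSpan ℝ (X \ {w0}) ≤ affineSpan ℝ (insert v Q) :=
      affineSpan_le.mpr (fun w hw => hC1 w hw.1 (fun h => hw.2 (mem_singleton_iff.mpr h)))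
    exact hC2 (hle hmem)
  · rw [convexHull_convexHull_union_left, Set.diff_union_self,
      Set.union_eq_self_of_subset_right (singleton_subset_iff.mpr hw0X)]
    exact hPX
end

section
/- A d-polytope P is a pyramid with apex v if and only if exactly one facet of P does not contain the vertex v. -/
open Set

/-- A pyramid with apex `v`: the convex hull of a polytope of one lower dimension
together with `v` outside its affine hull. -/
def IsPyramidWithApex {E : Type*} [AddCommGroup E] [Module ℝ E] (P : Set E) (v : E) : Prop :=
  ∃ Q : Set E, IsPolytope Q ∧ pdim Q + 1 = pdim P ∧ v ∉ affineSpan ℝ Q ∧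
    P = convexHull ℝ (Q ∪ {v})

namespace Stmt9Proof

variable {E : Type*} [AddCommGroup E] [Module ℝ E]

lemma fd_dir_of_finite {s : Set E} (hs : s.Finite) :
    FiniteDimensional ℝ (affineSpan ℝ s).direction := by
  rw [direction_affineSpan]; exact finiteDimensional_vectorSpan_of_finite ℝ hs

lemma fd_dir_hull (T : Finset E) :
    FiniteDimensional ℝ (affineSpan ℝ (convexHull ℝ (T : Set E))).direction := by
  rw [affineSpan_convexHull]; exact fd_dir_of_finite T.finite_toSet

lemma fd_dir_mono {s t : Set E} (h : s ⊆ t)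
    (ht : FiniteDimensional ℝ (affineSpan ℝ t).direction) :
    FiniteDimensional ℝ (affineSpan ℝ s).direction :=
  Submodule.finiteDimensional_of_le (AffineSubspace.direction_le (affineSpan_mono ℝ h))

lemma pdim_le {s t : Set E} (h : s ⊆ t)
    (ht : FiniteDimensional ℝ (affineSpan ℝ t).direction) : pdim s ≤ pdim t :=
  Submodule.finrank_mono (AffineSubspace.direction_le (affineSpan_mono ℝ h))

lemma pdim_convexHull (s : Set E) : pdim (convexHull ℝ s) = pdim s := by
  unfold pdim; rw [affineSpan_convexHull]

lemma pdim_insert_le (x : E) {s : Set E} (hs : s.Nonempty)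
    (hfd : FiniteDimensional ℝ (affineSpan ℝ s).direction) :
    pdim (insert x s) ≤ pdim s + 1 := by
  obtain ⟨p, hp⟩ := hs
  have hp' : p ∈ affineSpan ℝ s := subset_affineSpan ℝ s hp
  unfold pdim
  have h1 : affineSpan ℝ (insert x s) =
      affineSpan ℝ (insert x ((affineSpan ℝ s : Set E))) :=
    (affineSpan_insert_affineSpan ℝ x s).symm
  rw [h1, AffineSubspace.direction_affineSpan_insert hp']
  haveI : FiniteDimensional ℝ (Submodule.span ℝ {x -ᵥ p}) := by
    apply FiniteDimensional.span_of_finite; exact Set.finite_singleton _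
  calc Module.finrank ℝ (Submodule.span ℝ {x -ᵥ p} ⊔ (affineSpan ℝ s).direction : Submodule ℝ E)
      ≤ Module.finrank ℝ (Submodule.span ℝ ({x -ᵥ p} : Set E))
        + Module.finrank ℝ (affineSpan ℝ s).direction :=
        Submodule.finrank_add_le_finrank_add_finrank _ _
    _ ≤ pdim s + 1 := by
        unfold pdim
        have : Module.finrank ℝ (Submodule.span ℝ ({x -ᵥ p} : Set E)) ≤ 1 := by
          by_cases hz : x -ᵥ p = 0
          · rw [hz, Submodule.span_zero_singleton]; simp
          · rw [finrank_span_singleton hz]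
        omega



variable {E : Type*} [AddCommGroup E] [Module ℝ E]

lemma exists_dual_of_not_mem (D : Submodule ℝ E) {w : E} (hw : w ∉ D) :
    ∃ ℓ : E →ₗ[ℝ] ℝ, (∀ d ∈ D, ℓ d = 0) ∧ ℓ w = 1 := by
  have h0 : D.mkQ w ≠ 0 := by
    simpa [Submodule.Quotient.mk_eq_zero] using hw
  obtain ⟨φ, hφ⟩ : ∃ φ : Module.Dual ℝ (E ⧸ D), φ (D.mkQ w) ≠ 0 := by
    by_contra h
    push_neg at h
    exact h0 ((Module.forall_dual_apply_eq_zero_iff ℝ _).1 h)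
  refine ⟨(φ (D.mkQ w))⁻¹ • (φ ∘ₗ D.mkQ), fun d hd => ?_, ?_⟩
  · have : D.mkQ d = 0 := by simpa [Submodule.Quotient.mk_eq_zero] using hd
    simp [this]
  · simp only [LinearMap.smul_apply, LinearMap.comp_apply, smul_eq_mul, Submodule.mkQ_apply]
    exact inv_mul_cancel₀ (by simpa using hφ)

lemma exists_affine_vanishing {s : Set E} (hs : s.Nonempty) {x : E}
    (hx : x ∉ affineSpan ℝ s) :
    ∃ g : E →ᵃ[ℝ] ℝ, (∀ y ∈ affineSpan ℝ s, g y = 0) ∧ g x = 1 := by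
  obtain ⟨p, hp⟩ := hs
  have hp' : p ∈ affineSpan ℝ s := subset_affineSpan ℝ s hp
  have hw : x - p ∉ (affineSpan ℝ s).direction := by
    intro h
    have : (x - p) +ᵥ p ∈ affineSpan ℝ s := AffineSubspace.vadd_mem_of_mem_direction h hp'
    simpa using hx (by simpa using this)
  obtain ⟨ℓ, hℓ0, hℓ1⟩ := exists_dual_of_not_mem _ hw
  refine ⟨⟨fun y => ℓ (y - p), ℓ, fun p' v => ?_⟩, fun y hy => ?_, ?_⟩
  · show ℓ (v + p' - p) = ℓ v + ℓ (p' - p)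
    rw [add_sub_assoc, map_add]
  · show ℓ (y - p) = 0
    exact hℓ0 _ (AffineSubspace.vsub_mem_direction hy hp')
  · exact hℓ1


variable {E : Type*} [AddCommGroup E] [Module ℝ E]

lemma extreme_shrink {B A C : Set E} (h : IsExtreme ℝ B A) (hAC : A ⊆ C) (hCB : C ⊆ B) :
    IsExtreme ℝ C A :=
  ⟨hAC, fun x₁ h₁ x₂ h₂ x hx hseg => h.2 (hCB h₁) (hCB h₂) hx hseg⟩

lemma subset_extreme_of_centerMass {S : Finset E} {A : Set E}
    (hA : IsExtreme ℝ (convexHull ℝ (S : Set E)) A) :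
    ∀ T : Finset E, (T : Set E) ⊆ convexHull ℝ (S : Set E) →
      ∀ w : E → ℝ, (∀ i ∈ T, 0 < w i) → ∑ i ∈ T, w i = 1 →
      T.centerMass w id ∈ A → (T : Set E) ⊆ A := by
  classical
  intro T
  induction T using Finset.induction_on with
  | empty => intro _ w _ hsum _; simp at hsum
  | insert _ _ hsT _ =>
    rename_i a T ih
    intro hsub w hpos hsum hx
    rcases T.eq_empty_or_nonempty with rfl | hTne
    · have hwa : w a = 1 := by simpa using hsum
      have : ({a} : Finset E).centerMass w id = a := by
        rw [Finset.centerMass_singleton]; · rfl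
        · rw [hwa]; norm_num
      simp only [insert_empty_eq] at hx ⊢
      rw [this] at hx
      simpa using hx
    · have hwa : 0 < w a := hpos a (Finset.mem_insert_self a T)
      have hW : 0 < ∑ i ∈ T, w i :=
        Finset.sum_pos (fun i hi => hpos i (Finset.mem_insert_of_mem hi)) hTne
      have hsum' : w a + ∑ i ∈ T, w i = 1 := by
        rw [← Finset.sum_insert hsT]; exact hsum
      set y := T.centerMass w id with hy
      have hTsub : (T : Set E) ⊆ convexHull ℝ (S : Set E) :=
        fun z hz => hsub (by simp [hz])
      have hyP : y ∈ convexHull ℝ (S : Set E) := by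
        have : y ∈ convexHull ℝ (T : Set E) :=
          Finset.centerMass_id_mem_convexHull T
            (fun i hi => (hpos i (Finset.mem_insert_of_mem hi)).le) hW
        exact convexHull_min hTsub (convex_convexHull ℝ _) this
      have hcm : (insert a T).centerMass w id = w a • a + (∑ i ∈ T, w i) • y := by
        rw [Finset.centerMass_insert _ _ _ hsT (by positivity)]
        rw [hsum']
        simp; rfl
      have haP : a ∈ convexHull ℝ (S : Set E) := hsub (by simp)
      have hxseg : (insert a T).centerMass w id ∈ openSegment ℝ a y :=
        ⟨w a, ∑ i ∈ T, w i, hwa, hW, hsum', hcm.symm⟩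
      obtain ⟨haA, hyA⟩ := And.intro (hA.2 haP hyP hx hxseg) (hA.right_mem_of_mem_openSegment haP hyP hx hxseg)
      have hTA : (T : Set E) ⊆ A := by
        apply ih hTsub (fun i => w i / (∑ j ∈ T, w j))
          (fun i hi => div_pos (hpos i (Finset.mem_insert_of_mem hi)) hW)
          (by rw [← Finset.sum_div]; field_simp)
        have : T.centerMass (fun i => w i / (∑ j ∈ T, w j)) id = T.centerMass w id := by
          rw [Finset.centerMass, Finset.centerMass]
          rw [← Finset.sum_div]
          rw [div_self hW.ne', inv_one, one_smul]
          rw [Finset.smul_sum]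
          apply Finset.sum_congr rfl
          intro i _
          rw [smul_smul]
          congr 1
          field_simp
        rw [this, ← hy]; exact hyA
      intro z hz
      rcases Finset.mem_insert.1 (by exact_mod_cast hz) with rfl | hzT
      · exact haA
      · exact hTA hzT

lemma extreme_eq_convexHull_inter {S : Finset E} {A : Set E}
    (hA : IsExtreme ℝ (convexHull ℝ (S : Set E)) A) (hconv : Convex ℝ A) :
    A = convexHull ℝ ((S : Set E) ∩ A) := by
  classical
  apply Subset.antisymm
  · intro x hx
    have hxP := hA.1 hx
    rw [Finset.convexHull_eq] at hxP
    obtain ⟨w, hw0, hw1, hwx⟩ := hxP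
    set T := S.filter (fun i => w i ≠ 0) with hT
    have hTS : T ⊆ S := Finset.filter_subset _ _
    have hTsub : (T : Set E) ⊆ convexHull ℝ (S : Set E) :=
      fun z hz => subset_convexHull ℝ _ (hTS hz)
    have hsum : ∑ i ∈ T, w i = 1 := by
      rw [hT, Finset.sum_filter_ne_zero]; exact hw1
    have hcm : T.centerMass w id = x := by
      rw [hT, Finset.centerMass_filter_ne_zero]; exact hwx
    have hpos : ∀ i ∈ T, 0 < w i := by
      intro i hi
      rw [hT, Finset.mem_filter] at hi
      exact lt_of_le_of_ne (hw0 i hi.1) (Ne.symm hi.2)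
    have hTA : (T : Set E) ⊆ A :=
      subset_extreme_of_centerMass hA T hTsub w hpos hsum (by rw [hcm]; exact hx)
    have hxT : x ∈ convexHull ℝ (T : Set E) := by
      rw [← hcm]
      exact Finset.centerMass_id_mem_convexHull T (fun i hi => (hpos i hi).le)
        (by rw [hsum]; norm_num)
    exact convexHull_mono (subset_inter (fun z hz => hTS hz) hTA) hxT
  · exact convexHull_min inter_subset_right hconv


lemma extreme_eq_self_of_pdim_le {T : Finset E} {A : Set E}
    (hA : IsExtreme ℝ (convexHull ℝ (T : Set E)) A) (hconv : Convex ℝ A) (hne : A.Nonempty)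
    (hdim : pdim (convexHull ℝ (T : Set E)) ≤ pdim A) :
    A = convexHull ℝ (T : Set E) := by
  classical
  set Q := convexHull ℝ (T : Set E) with hQ
  haveI fdQ : FiniteDimensional ℝ (affineSpan ℝ Q).direction := fd_dir_hull T
  set T' := T.filter (fun z => z ∈ A) with hT'
  have hcoe : (T' : Set E) = (T : Set E) ∩ A := by
    ext z; simp [hT', Finset.mem_filter]
  have hAhull : A = convexHull ℝ (T' : Set E) := by
    rw [hcoe]; exact extreme_eq_convexHull_inter hA hconv
  -- affine spans agree
  have hle : affineSpan ℝ A ≤ affineSpan ℝ Q := affineSpan_mono ℝ hA.1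
  have hdirle : (affineSpan ℝ A).direction ≤ (affineSpan ℝ Q).direction :=
    AffineSubspace.direction_le hle
  have hfr : Module.finrank ℝ (affineSpan ℝ A).direction
      = Module.finrank ℝ (affineSpan ℝ Q).direction :=
    le_antisymm (Submodule.finrank_mono hdirle) hdim
  have hdir : (affineSpan ℝ A).direction = (affineSpan ℝ Q).direction :=
    Submodule.eq_of_le_of_finrank_eq hdirle hfr
  obtain ⟨a0, ha0⟩ := hne
  have hspan : affineSpan ℝ A = affineSpan ℝ Q :=
    AffineSubspace.ext_of_direction_eq hdir
      ⟨a0, subset_affineSpan ℝ A ha0, hle (subset_affineSpan ℝ A ha0)⟩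
  have hAspan : affineSpan ℝ ((T' : Set E)) = affineSpan ℝ Q := by
    rw [← hspan]; conv_lhs => rw [← affineSpan_convexHull]
    rw [← hAhull]
  -- index type
  haveI hne' : Nonempty {z // z ∈ T'} := by
    by_contra h
    rw [not_nonempty_iff] at h
    have hT'e : T' = ∅ := by
      by_contra h2
      obtain ⟨z, hz⟩ := Finset.nonempty_iff_ne_empty.2 h2
      exact h.false ⟨z, hz⟩
    rw [hAhull, hT'e] at ha0
    simpa using ha0
  have hcard : 0 < (Fintype.card {z // z ∈ T'} : ℝ) := by
    have := Fintype.card_pos (α := {z // z ∈ T'})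
    exact_mod_cast this
  set ι := {z // z ∈ T'}
  set p : ι → E := fun i => (i : E) with hpdef
  have hrange : Set.range p = (T' : Set E) := Subtype.range_coe
  -- a := centroid
  set c : ι → ℝ := fun _ => (Fintype.card ι : ℝ)⁻¹ with hc
  have hc1 : ∑ i : ι, c i = 1 := by
    simp [hc, Finset.sum_const, nsmul_eq_mul]
  set a : E := (Finset.univ : Finset ι).affineCombination ℝ p c with ha
  have hmemA : ∀ w : ι → ℝ, (∀ i, 0 ≤ w i) → ∑ i : ι, w i = 1 →
      (Finset.univ : Finset ι).affineCombination ℝ p w ∈ A := by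
    intro w hw0 hw1
    rw [hAhull, affineCombination_eq_centerMass hw1]
    exact Finset.centerMass_mem_convexHull _ (fun i _ => hw0 i)
      (by rw [hw1]; norm_num) (fun i _ => by exact_mod_cast i.2)
  have haA : a ∈ A := hmemA c (fun i => by positivity) hc1
  -- main inclusion
  apply Subset.antisymm hA.1
  intro x hxQ
  have hx' : x ∈ affineSpan ℝ (Set.range p) := by
    rw [hrange, hAspan]
    exact subset_affineSpan ℝ Q hxQ
  obtain ⟨s, μ, hμ1, hxeq⟩ := eq_affineCombination_of_mem_affineSpan hx'
  set μ' : ι → ℝ := Set.indicator (↑s : Set ι) μ with hμ'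
  have hxeq' : x = (Finset.univ : Finset ι).affineCombination ℝ p μ' := by
    rw [hxeq]
    exact Finset.affineCombination_indicator_subset _ _ (Finset.subset_univ s)
  have hμ'1 : ∑ i : ι, μ' i = 1 := by
    rw [hμ', Finset.sum_indicator_subset _ (Finset.subset_univ s)]
    exact hμ1
  -- choose epsilon
  obtain ⟨ε, hε, hw0⟩ : ∃ ε : ℝ, 0 < ε ∧ ∀ i : ι, 0 ≤ (1 + ε) * c i - ε * μ' i := by
    set m := Finset.univ.sup' (Finset.univ_nonempty) (fun i : ι => μ' i - c i) with hm
    by_cases hm0 : m ≤ 0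
    · refine ⟨1, one_pos, fun i => ?_⟩
      have h2 : μ' i - c i ≤ m := by
        rw [hm]; exact Finset.le_sup' (fun i : ι => μ' i - c i) (Finset.mem_univ i)
      have h3 : (0:ℝ) ≤ c i := by rw [hc]; positivity
      nlinarith
    · push_neg at hm0
      refine ⟨(Fintype.card ι : ℝ)⁻¹ / m, by positivity, fun i => ?_⟩
      have h2 : μ' i - c i ≤ m := by
        rw [hm]; exact Finset.le_sup' (fun i : ι => μ' i - c i) (Finset.mem_univ i)
      have h4 : (Fintype.card ι : ℝ)⁻¹ / m * (μ' i - c i) ≤ (Fintype.card ι : ℝ)⁻¹ / m * m :=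
        mul_le_mul_of_nonneg_left h2 (by positivity)
      have h5 : (Fintype.card ι : ℝ)⁻¹ / m * m = (Fintype.card ι : ℝ)⁻¹ := by
        field_simp
      have h6 : c i = (Fintype.card ι : ℝ)⁻¹ := rfl
      nlinarith
  set w : ι → ℝ := fun i => (1 + ε) * c i - ε * μ' i with hwdef
  have hwsum : ∑ i : ι, w i = 1 := by
    rw [hwdef]
    rw [Finset.sum_sub_distrib, ← Finset.mul_sum, ← Finset.mul_sum, hc1, hμ'1]
    ring
  set z : E := (Finset.univ : Finset ι).affineCombination ℝ p w with hz
  have hzA : z ∈ A := hmemA w hw0 hwsum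
  -- identity : z - a = ε • (a - x)
  have hid : z - a = ε • (a - x) := by
    have h1 : z -ᵥ a = (Finset.univ : Finset ι).weightedVSub p (w - c) :=
      Finset.affineCombination_vsub _ _ _ _
    have h2 : a -ᵥ x = (Finset.univ : Finset ι).weightedVSub p (c - μ') := by
      conv_lhs => rw [hxeq']
      exact Finset.affineCombination_vsub _ _ _ _
    have h3 : (w - c) = ε • (c - μ') := by
      funext i
      simp only [Pi.sub_apply, Pi.smul_apply, smul_eq_mul, hwdef]
      ring
    have h4 := ((Finset.univ : Finset ι).weightedVSub p).map_smul ε (c - μ')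
    calc z - a = (Finset.univ : Finset ι).weightedVSub p (w - c) := h1
      _ = (Finset.univ : Finset ι).weightedVSub p (ε • (c - μ')) := by rw [h3]
      _ = ε • ((Finset.univ : Finset ι).weightedVSub p (c - μ')) := h4
      _ = ε • (a - x) := by rw [← h2, vsub_eq_sub]
  have h1ε : (0:ℝ) < 1 + ε := by linarith
  have hkey : a = ((1 + ε)⁻¹ * ε) • x + (1 + ε)⁻¹ • z := by
    have h : (1 + ε) • a = ε • x + z := by
      have hz2 : z = ε • a - ε • x + a := by
        have : z - a = ε • a - ε • x := by rw [hid, smul_sub]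
        rw [← this]; abel
      rw [hz2]
      module
    calc a = (1 + ε)⁻¹ • ((1 + ε) • a) := by
          rw [smul_smul, inv_mul_cancel₀ (ne_of_gt h1ε), one_smul]
      _ = (1 + ε)⁻¹ • (ε • x + z) := by rw [h]
      _ = ((1 + ε)⁻¹ * ε) • x + (1 + ε)⁻¹ • z := by rw [smul_add, smul_smul]
  have hseg : a ∈ openSegment ℝ x z :=
    ⟨(1 + ε)⁻¹ * ε, (1 + ε)⁻¹, by positivity, by positivity,
      by field_simp; ring, hkey.symm⟩
  exact hA.2 hxQ (hA.1 hzA) haA hseg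

lemma exists_sep {S : Finset E} {u : E} (hu : u ∉ convexHull ℝ (S : Set E)) :
    ∃ ℓ : E →ₗ[ℝ] ℝ, ∀ s ∈ S, ℓ s < ℓ u := by
  classical
  set W := Submodule.span ℝ (insert u (S : Set E)) with hW
  haveI : FiniteDimensional ℝ W :=
    FiniteDimensional.span_of_finite ℝ ((S.finite_toSet).insert u)
  obtain ⟨r, hr⟩ := LinearMap.exists_extend (LinearMap.id (R := ℝ) (M := W))
  set e := (Module.finBasis ℝ W).equivFun with he
  set n := Module.finrank ℝ W
  set G : E →ₗ[ℝ] (Fin n → ℝ) := e.toLinearMap ∘ₗ r with hG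
  have hback : ∀ y : E, y ∈ W → W.subtype (e.symm (G y)) = y := by
    intro y hy
    have h1 : r y = ⟨y, hy⟩ := by
      have := congrArg (fun f => f ⟨y, hy⟩) hr
      simpa using this
    simp [hG, h1]
  have hmemW : ∀ s ∈ S, (s : E) ∈ W := fun s hs =>
    Submodule.subset_span (Set.mem_insert_of_mem _ hs)
  have huW : u ∈ W := Submodule.subset_span (Set.mem_insert _ _)
  have hx₀ : G u ∉ convexHull ℝ (G '' (S : Set E)) := by
    intro hmem
    set ψ : (Fin n → ℝ) →ₗ[ℝ] E := W.subtype ∘ₗ (e.symm.toLinearMap) with hψ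
    have h1 : ψ (G u) ∈ ψ '' (convexHull ℝ (G '' (S : Set E))) := ⟨_, hmem, rfl⟩
    rw [LinearMap.image_convexHull] at h1
    have h2 : ψ '' (G '' (S : Set E)) = (S : Set E) := by
      rw [← Set.image_comp]
      have h3 : ∀ a ∈ (S : Set E), (ψ ∘ G) a = id a := fun a ha => hback a (hmemW a ha)
      rw [Set.image_congr h3, Set.image_id]
    rw [h2] at h1
    have h4 : ψ (G u) = u := hback u huW
    rw [h4] at h1
    exact hu h1
  have hfin : (G '' (S : Set E)).Finite := S.finite_toSet.image _
  have hclosed : IsClosed (convexHull ℝ (G '' (S : Set E))) :=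
    (hfin.isCompact_convexHull (𝕜 := ℝ)).isClosed
  obtain ⟨f, c, hfc, hcu⟩ :=
    geometric_hahn_banach_closed_point (convex_convexHull ℝ _) hclosed hx₀
  refine ⟨f.toLinearMap ∘ₗ G, fun s hs => ?_⟩
  have h1 : f (G s) < c := hfc _ (subset_convexHull ℝ _ ⟨s, hs, rfl⟩)
  simpa using h1.trans hcu

noncomputable def fMax (S : Finset E) (hS : S.Nonempty) (g : E →ᵃ[ℝ] ℝ) : ℝ := S.sup' hS g

def fFace (S : Finset E) (hS : S.Nonempty) (g : E →ᵃ[ℝ] ℝ) : Set E :=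
  {x ∈ convexHull ℝ (S : Set E) | g x = fMax S hS g}

variable {S : Finset E} (hS : S.Nonempty) (g : E →ᵃ[ℝ] ℝ)

lemma le_fMax : ∀ x ∈ convexHull ℝ (S : Set E), g x ≤ fMax S hS g := by
  intro x hx
  have hsub : (S : Set E) ⊆ g ⁻¹' (Set.Iic (fMax S hS g)) := by
    intro s hs
    exact Finset.le_sup' (f := (g : E → ℝ)) (by exact_mod_cast hs)
  have hconv : Convex ℝ (g ⁻¹' (Set.Iic (fMax S hS g))) :=
    (convex_Iic _).affine_preimage g
  exact convexHull_min hsub hconv hx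

lemma combo_apply (x y : E) {a b : ℝ} (hab : a + b = 1) :
    g (a • x + b • y) = a * g x + b * g y := by
  have := Convex.combo_affine_apply (f := g) (x := x) (y := y) hab
  simpa [smul_eq_mul] using this

lemma fFace_extreme : IsExtreme ℝ (convexHull ℝ (S : Set E)) (fFace S hS g) := by
  constructor
  · exact fun x hx => hx.1
  · rintro x₁ h₁ x₂ h₂ x ⟨hxP, hxM⟩ ⟨a, b, ha, hb, hab, hx⟩
    have hc : a * g x₁ + b * g x₂ = fMax S hS g := by
      rw [← combo_apply g x₁ x₂ hab, hx, hxM]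
    have hle₁ : g x₁ ≤ fMax S hS g := le_fMax hS g x₁ h₁
    have hle₂ : g x₂ ≤ fMax S hS g := le_fMax hS g x₂ h₂
    have hM : a * fMax S hS g + b * fMax S hS g = fMax S hS g := by
      rw [← add_mul, hab, one_mul]
    have e₁ : a * (fMax S hS g - g x₁) = b * (g x₂ - fMax S hS g) := by
      have := hc; ring_nf; ring_nf at this hM ⊢; linarith
    have f₁ : g x₁ = fMax S hS g := by
      by_contra hne
      have hlt : g x₁ < fMax S hS g := lt_of_le_of_ne hle₁ hne
      nlinarith [mul_pos ha (sub_pos.2 hlt), mul_nonneg hb.le (sub_nonneg.2 hle₂)]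
    have f₂ : g x₂ = fMax S hS g := by
      by_contra hne
      have hlt : g x₂ < fMax S hS g := lt_of_le_of_ne hle₂ hne
      nlinarith [mul_pos hb (sub_pos.2 hlt), mul_nonneg ha.le (sub_nonneg.2 hle₁)]
    exact ⟨h₁, f₁⟩

lemma fFace_convex : Convex ℝ (fFace S hS g) := by
  have : fFace S hS g = convexHull ℝ (S : Set E) ∩ g ⁻¹' {fMax S hS g} := by
    ext x; simp [fFace, Set.mem_preimage]
  rw [this]
  exact (convex_convexHull ℝ _).inter ((convex_singleton _).affine_preimage g)

lemma fFace_nonempty : (fFace S hS g).Nonempty := by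
  obtain ⟨s, hsS, hs⟩ := Finset.exists_mem_eq_sup' hS (g : E → ℝ)
  exact ⟨s, subset_convexHull ℝ _ (by exact_mod_cast hsS), hs.symm⟩

lemma mem_fFace_of_mem {s : E} (hs : s ∈ S) :
    s ∈ fFace S hS g ↔ g s = fMax S hS g :=
  ⟨fun h => h.2, fun h => ⟨subset_convexHull ℝ _ (by exact_mod_cast hs), h⟩⟩

lemma fFace_eq_hull [DecidablePred (fun s : E => g s = fMax S hS g)] :
    fFace S hS g = convexHull ℝ ((S.filter (fun s => g s = fMax S hS g) : Finset E) : Set E) := by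
  have h1 := extreme_eq_convexHull_inter (fFace_extreme hS g) (fFace_convex hS g)
  rw [h1]
  congr 1
  ext z
  simp only [Finset.coe_filter, Set.mem_inter_iff, Set.mem_setOf_eq, Finset.mem_coe]
  constructor
  · rintro ⟨hz, hzF⟩; exact ⟨hz, hzF.2⟩
  · rintro ⟨hz, hzM⟩; exact ⟨hz, (mem_fFace_of_mem hS g hz).2 hzM⟩

noncomputable def comboAff (a b : ℝ) (g h : E →ᵃ[ℝ] ℝ) : E →ᵃ[ℝ] ℝ where
  toFun := fun x => a * g x + b * h x
  linear := a • g.linear + b • h.linear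
  map_vadd' := by
    intro p v
    have e1 : g (v + p) = g.linear v + g p := by simpa [vadd_eq_add] using g.map_vadd p v
    have e2 : h (v + p) = h.linear v + h p := by simpa [vadd_eq_add] using h.map_vadd p v
    simp only [LinearMap.add_apply, LinearMap.smul_apply, smul_eq_mul, vadd_eq_add, e1, e2]
    ring

@[simp] lemma comboAff_apply (a b : ℝ) (g h : E →ᵃ[ℝ] ℝ) (x : E) :
    comboAff a b g h x = a * g x + b * h x := rfl

lemma growth {S : Finset E} (hS : S.Nonempty) (g : E →ᵃ[ℝ] ℝ) {s₀ : E} (hs₀ : s₀ ∈ S)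
    (hlt : g s₀ < fMax S hS g)
    (hspan : ¬ (S : Set E) ⊆ (affineSpan ℝ (insert s₀ (fFace S hS g)) : Set E)) :
    ∃ g' : E →ᵃ[ℝ] ℝ, fFace S hS g ⊆ fFace S hS g' ∧ g' s₀ < fMax S hS g' ∧
      ¬ fFace S hS g' ⊆ fFace S hS g := by
  classical
  set M := fMax S hS g with hMdef
  set A := fFace S hS g with hAdef
  obtain ⟨s₂, hs₂S, hs₂⟩ : ∃ s₂ ∈ S, (s₂ : E) ∉ affineSpan ℝ (insert s₀ A) := by
    by_contra hcon; push_neg at hcon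
    exact hspan (fun z hz => hcon z hz)
  have hins : (insert s₀ A).Nonempty := ⟨s₀, Set.mem_insert _ _⟩
  obtain ⟨gh, hh0, hh1⟩ := exists_affine_vanishing hins hs₂
  have hA0 : ∀ y ∈ A, gh y = 0 := fun y hy =>
    hh0 y (subset_affineSpan _ _ (Set.mem_insert_of_mem _ hy))
  have hs₀0 : gh s₀ = 0 := hh0 s₀ (subset_affineSpan _ _ (Set.mem_insert _ _))
  have hgsM : ∀ s ∈ S, g s ≤ M := fun s hs => Finset.le_sup' (g : E → ℝ) hs
  have hClt : ∀ s ∈ S, 0 < gh s → g s < M := by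
    intro s hs hpos
    rcases lt_or_eq_of_le (hgsM s hs) with h | h
    · exact h
    · exfalso
      have hsA : s ∈ A := (mem_fFace_of_mem hS g hs).2 h
      rw [hA0 s hsA] at hpos; exact lt_irrefl 0 hpos
  set C := S.filter (fun s => 0 < gh s) with hC
  have hs₂C : s₂ ∈ C := Finset.mem_filter.2 ⟨hs₂S, by rw [hh1]; norm_num⟩
  have hCne : C.Nonempty := ⟨s₂, hs₂C⟩
  set tf : E → ℝ := fun s => (M - g s) / ((M - g s) + gh s) with htf
  set t := C.inf' hCne tf with ht
  have htf_pos : ∀ s ∈ C, 0 < tf s ∧ tf s < 1 := by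
    intro s hsC
    obtain ⟨hsS, hdpos⟩ := Finset.mem_filter.1 hsC
    have h1 : 0 < M - g s := sub_pos.2 (hClt s hsS hdpos)
    have h2 : 0 < (M - g s) + gh s := by linarith
    exact ⟨div_pos h1 h2, (div_lt_one h2).2 (by linarith)⟩
  have ht0 : 0 < t := by
    rw [ht, Finset.lt_inf'_iff]
    exact fun s hs => (htf_pos s hs).1
  have ht1 : t < 1 := lt_of_le_of_lt (Finset.inf'_le _ hs₂C) (htf_pos s₂ hs₂C).2
  set g' := comboAff (1 - t) t g gh with hg'
  have hbound : ∀ s ∈ S, g' s ≤ (1 - t) * M := by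
    intro s hsS
    rw [hg', comboAff_apply]
    by_cases hpos : 0 < gh s
    · have hsC : s ∈ C := Finset.mem_filter.2 ⟨hsS, hpos⟩
      have hgs : g s < M := hClt s hsS hpos
      have h1 : 0 < M - g s := by linarith
      have h2 : 0 < (M - g s) + gh s := by linarith
      have h3 : t ≤ tf s := Finset.inf'_le _ hsC
      have h4 : t * ((M - g s) + gh s) ≤ M - g s := by
        rw [htf] at h3
        exact (le_div_iff₀ h2).1 h3
      nlinarith [h4]
    · push_neg at hpos
      have hgs : g s ≤ M := hgsM s hsS
      have h5 : (1 - t) * g s ≤ (1 - t) * M := mul_le_mul_of_nonneg_left hgs (by linarith)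
      have h6 : t * gh s ≤ 0 := mul_nonpos_of_nonneg_of_nonpos ht0.le hpos
      linarith
  obtain ⟨s₁, hs₁S, hs₁⟩ := Finset.exists_mem_eq_sup' hS (g : E → ℝ)
  have hs₁A : s₁ ∈ A := (mem_fFace_of_mem hS g hs₁S).2 hs₁.symm
  have hgh₁ : gh s₁ = 0 := hA0 s₁ hs₁A
  have hg's₁ : g' s₁ = (1 - t) * M := by
    rw [hg', comboAff_apply, hgh₁]
    have : g s₁ = M := hs₁.symm
    rw [this]; ring
  have hM' : fMax S hS g' = (1 - t) * M := by
    apply le_antisymm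
    · exact Finset.sup'_le hS _ hbound
    · calc (1 - t) * M = g' s₁ := hg's₁.symm
        _ ≤ fMax S hS g' := Finset.le_sup' _ hs₁S
  have hAsub : A ⊆ fFace S hS g' := by
    rintro x ⟨hxP, hxM⟩
    refine ⟨hxP, ?_⟩
    have h0 : gh x = 0 := hA0 x ⟨hxP, hxM⟩
    rw [hg', comboAff_apply, h0, hM', hxM]
    ring
  obtain ⟨sm, hsmC, hsm⟩ := Finset.exists_mem_eq_inf' hCne tf
  have hsmS : sm ∈ S := (Finset.mem_filter.1 hsmC).1
  have hsmpos : 0 < gh sm := (Finset.mem_filter.1 hsmC).2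
  have hsmlt : g sm < M := hClt sm hsmS hsmpos
  have hsmA' : sm ∈ fFace S hS g' := by
    refine ⟨subset_convexHull ℝ _ (by exact_mod_cast hsmS), ?_⟩
    rw [hM', hg', comboAff_apply]
    have hD : (0:ℝ) < (M - g sm) + gh sm := by linarith
    have hteq : t * ((M - g sm) + gh sm) = M - g sm := by
      rw [ht, hsm]
      simp only [htf]
      have hD' : (M - g sm) + gh sm ≠ 0 := ne_of_gt hD
      field_simp
    nlinarith [hteq]
  have hsmNA : sm ∉ A := fun hin => absurd hin.2 (ne_of_lt hsmlt)
  refine ⟨g', hAsub, ?_, fun hsub => hsmNA (hsub hsmA')⟩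
  rw [hM', hg', comboAff_apply, hs₀0]
  have h7 := mul_lt_mul_of_pos_left hlt (by linarith : (0:ℝ) < 1 - t)
  linarith

lemma pdim_face_lt {S : Finset E} (hS : S.Nonempty) (g : E →ᵃ[ℝ] ℝ)
    (hproper : fFace S hS g ≠ convexHull ℝ (S : Set E)) :
    pdim (fFace S hS g) < pdim (convexHull ℝ (S : Set E)) := by
  have hle : pdim (fFace S hS g) ≤ pdim (convexHull ℝ (S : Set E)) :=
    pdim_le (fFace_extreme hS g).1 (fd_dir_hull S)
  rcases lt_or_eq_of_le hle with h | h
  · exact h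
  · exact absurd (extreme_eq_self_of_pdim_le (fFace_extreme hS g) (fFace_convex hS g)
      (fFace_nonempty hS g) (le_of_eq h.symm)) hproper

lemma pdim_lt_of_ssubset_faces {S : Finset E} (hS : S.Nonempty) {g g' : E →ᵃ[ℝ] ℝ}
    (hsub : fFace S hS g ⊆ fFace S hS g') (hnsub : ¬ fFace S hS g' ⊆ fFace S hS g) :
    pdim (fFace S hS g) < pdim (fFace S hS g') := by
  classical
  have hfd' : FiniteDimensional ℝ (affineSpan ℝ (fFace S hS g')).direction :=
    fd_dir_mono (fFace_extreme hS g').1 (fd_dir_hull S)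
  have hle : pdim (fFace S hS g) ≤ pdim (fFace S hS g') := pdim_le hsub hfd'
  rcases lt_or_eq_of_le hle with h | h
  · exact h
  · exfalso
    set T' := S.filter (fun s => g' s = fMax S hS g') with hT'
    have hhull : fFace S hS g' = convexHull ℝ (T' : Set E) := fFace_eq_hull hS g'
    have hext : IsExtreme ℝ (convexHull ℝ (T' : Set E)) (fFace S hS g) := by
      rw [← hhull]
      exact extreme_shrink (fFace_extreme hS g) hsub (fFace_extreme hS g').1
    have heq := extreme_eq_self_of_pdim_le hext (fFace_convex hS g)
      (fFace_nonempty hS g) (by rw [← hhull]; exact le_of_eq h.symm)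
    rw [← hhull] at heq
    exact hnsub (le_of_eq heq.symm)

lemma exists_facet_aux {S : Finset E} (hS : S.Nonempty) :
    ∀ n : ℕ, ∀ g : E →ᵃ[ℝ] ℝ, ∀ s₀, s₀ ∈ S → g s₀ < fMax S hS g →
      pdim (convexHull ℝ (S : Set E)) ≤ n + 1 + pdim (fFace S hS g) →
      ∃ g' : E →ᵃ[ℝ] ℝ, fFace S hS g ⊆ fFace S hS g' ∧ g' s₀ < fMax S hS g' ∧
        IsFacet (convexHull ℝ (S : Set E)) (fFace S hS g') := by
  have hproper : ∀ (g : E →ᵃ[ℝ] ℝ) (s₀ : E), s₀ ∈ S → g s₀ < fMax S hS g →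
      fFace S hS g ≠ convexHull ℝ (S : Set E) := by
    intro g s₀ hs₀ hlt he
    have hs₀P : s₀ ∈ convexHull ℝ (S : Set E) := subset_convexHull ℝ _ (by exact_mod_cast hs₀)
    rw [← he] at hs₀P
    exact absurd hs₀P.2 (ne_of_lt hlt)
  intro n
  induction n with
  | zero =>
    intro g s₀ hs₀ hlt hdim
    have h1 := pdim_face_lt hS g (hproper g s₀ hs₀ hlt)
    exact ⟨g, subset_rfl, hlt,
      ⟨fFace_nonempty hS g, ⟨fFace_extreme hS g, fFace_convex hS g⟩, by omega⟩⟩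
  | succ n ih =>
    intro g s₀ hs₀ hlt hdim
    have h1 := pdim_face_lt hS g (hproper g s₀ hs₀ hlt)
    by_cases hface : pdim (fFace S hS g) + 1 = pdim (convexHull ℝ (S : Set E))
    · exact ⟨g, subset_rfl, hlt,
        ⟨fFace_nonempty hS g, ⟨fFace_extreme hS g, fFace_convex hS g⟩, hface⟩⟩
    · have hfdA : FiniteDimensional ℝ (affineSpan ℝ (fFace S hS g)).direction :=
        fd_dir_mono (fFace_extreme hS g).1 (fd_dir_hull S)
      have hspan : ¬ (S : Set E) ⊆ (affineSpan ℝ (insert s₀ (fFace S hS g)) : Set E) := by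
        intro hsub
        have hle : affineSpan ℝ (S : Set E) ≤ affineSpan ℝ (insert s₀ (fFace S hS g)) := by
          rw [affineSpan_le]
          intro z hz
          exact hsub hz
        have hfdI : FiniteDimensional ℝ (affineSpan ℝ (insert s₀ (fFace S hS g))).direction := by
          apply fd_dir_mono (t := convexHull ℝ (S : Set E)) ?_ (fd_dir_hull S)
          exact Set.insert_subset (subset_convexHull ℝ _ (by exact_mod_cast hs₀))
            (fFace_extreme hS g).1
        have h3 : pdim (convexHull ℝ (S : Set E)) ≤ pdim (insert s₀ (fFace S hS g)) := by
          rw [pdim_convexHull]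
          exact Submodule.finrank_mono (AffineSubspace.direction_le hle)
        have h4 : pdim (insert s₀ (fFace S hS g)) ≤ pdim (fFace S hS g) + 1 :=
          pdim_insert_le _ (fFace_nonempty hS g) hfdA
        omega
      obtain ⟨g'', hsub'', hlt'', hnsub''⟩ := growth hS g hs₀ hlt hspan
      have h5 : pdim (fFace S hS g) < pdim (fFace S hS g'') :=
        pdim_lt_of_ssubset_faces hS hsub'' hnsub''
      obtain ⟨g', h6, h7, h8⟩ := ih g'' s₀ hs₀ hlt'' (by omega)
      exact ⟨g', hsub''.trans h6, h7, h8⟩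

lemma singleton_face [DecidableEq E] {S : Finset E} {u : E} (hu : u ∈ S)
    (h : u ∉ convexHull ℝ ((S.erase u : Finset E) : Set E)) :
    ∃ g : E →ᵃ[ℝ] ℝ, fFace S ⟨u, hu⟩ g = {u} ∧ fMax S ⟨u, hu⟩ g = g u ∧
      (∀ s ∈ S, s ≠ u → g s < g u) := by
  classical
  obtain ⟨ℓ, hℓ⟩ := exists_sep h
  set g := ℓ.toAffineMap with hg
  have hgs : ∀ s ∈ S, s ≠ u → g s < g u := fun s hs hne =>
    hℓ s (Finset.mem_erase.2 ⟨hne, hs⟩)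
  have hM : fMax S ⟨u, hu⟩ g = g u := by
    apply le_antisymm
    · apply Finset.sup'_le
      intro s hs
      by_cases he : s = u
      · rw [he]
      · exact (hgs s hs he).le
    · exact Finset.le_sup' (g : E → ℝ) hu
  refine ⟨g, ?_, hM, hgs⟩
  have hfilter : S.filter (fun s => g s = fMax S ⟨u, hu⟩ g) = {u} := by
    ext s
    simp only [Finset.mem_filter, Finset.mem_singleton, hM]
    constructor
    · rintro ⟨hsS, hgs'⟩
      by_contra hne
      exact absurd hgs' (ne_of_lt (hgs s hsS hne))
    · rintro rfl; exact ⟨hu, rfl⟩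
  rw [fFace_eq_hull (S := S) ⟨u, hu⟩ g, hfilter]
  simp

lemma mem_extremePoints_of_not_mem_erase [DecidableEq E] {S : Finset E} {u : E} (hu : u ∈ S)
    (h : u ∉ convexHull ℝ ((S.erase u : Finset E) : Set E)) :
    u ∈ (convexHull ℝ (S : Set E)).extremePoints ℝ := by
  obtain ⟨g, hface, _, _⟩ := singleton_face hu h
  have hext := fFace_extreme (S := S) ⟨u, hu⟩ g
  rw [hface] at hext
  exact isExtreme_singleton.1 hext

lemma not_mem_erase_of_extremePoint [DecidableEq E] {S : Finset E} {u : E}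
    (hu : u ∈ (convexHull ℝ (S : Set E)).extremePoints ℝ) :
    u ∉ convexHull ℝ ((S.erase u : Finset E) : Set E) := by
  intro hmem
  have h2 := (convex_convexHull ℝ (S : Set E)).mem_extremePoints_iff_mem_diff_convexHull_diff.1 hu
  apply h2.2
  apply convexHull_mono ?_ hmem
  rw [Finset.coe_erase]
  exact fun z hz => ⟨subset_convexHull ℝ _ hz.1, hz.2⟩

lemma affine_apply_centerMass (g : E →ᵃ[ℝ] ℝ) {T : Finset E} {w : E → ℝ}
    (h1 : ∑ i ∈ T, w i = 1) :
    g (T.centerMass w id) = ∑ i ∈ T, w i * g i := by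
  rw [← affineCombination_eq_centerMass h1, Finset.map_affineCombination T id w h1 g,
    affineCombination_eq_centerMass h1, Finset.centerMass_eq_of_sum_1 _ _ h1]
  simp [smul_eq_mul]

lemma exists_facet_sep {S : Finset E} (hS : S.Nonempty) {u x : E}
    (hu : u ∈ (convexHull ℝ (S : Set E)).extremePoints ℝ)
    (hx : x ∈ convexHull ℝ (S : Set E)) (hxu : x ≠ u)
    (hd : 1 ≤ pdim (convexHull ℝ (S : Set E))) :
    ∃ G : Set E, IsFacet (convexHull ℝ (S : Set E)) G ∧ u ∈ G ∧ x ∉ G := by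
  classical
  have huS : u ∈ S := by
    have := extremePoints_convexHull_subset hu
    exact_mod_cast this
  obtain ⟨g, hface, hM, hgs⟩ := singleton_face huS (not_mem_erase_of_extremePoint hu)
  have hx' := hx
  rw [Finset.convexHull_eq] at hx'
  obtain ⟨w, hw0, hw1, hwx⟩ := hx'
  obtain ⟨s₀, hs₀S, hs₀ne, hs₀w⟩ : ∃ s₀ ∈ S, s₀ ≠ u ∧ 0 < w s₀ := by
    by_contra hcon
    push_neg at hcon
    have hall : ∀ s ∈ S, s ≠ u → w s = 0 := fun s hs hne =>
      le_antisymm (hcon s hs hne) (hw0 s hs)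
    have hwu : w u = 1 := by
      rw [← hw1, Finset.sum_eq_single u (fun b hb hbne => hall b hb hbne)
        (fun hus => absurd huS hus)]
    have hxu' : x = u := by
      rw [← hwx, Finset.centerMass_eq_of_sum_1 _ _ hw1,
        Finset.sum_eq_single u (fun b hb hbne => by rw [hall b hb hbne]; simp)
          (fun hus => absurd huS hus), hwu]
      simp
    exact hxu hxu'
  have hlt : g s₀ < fMax S hS g := by
    have h1 : fMax S hS g = fMax S ⟨u, huS⟩ g := rfl
    rw [h1, hM]
    exact hgs s₀ hs₀S hs₀ne
  obtain ⟨g', hsub, hlt', hfacet⟩ :=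
    exists_facet_aux hS (pdim (convexHull ℝ (S : Set E))) g s₀ hs₀S hlt (by omega)
  refine ⟨fFace S hS g', hfacet, ?_, ?_⟩
  · apply hsub
    rw [show fFace S hS g = {u} from hface]
    exact Set.mem_singleton u
  · intro hxG
    have hg'x : g' x = fMax S hS g' := hxG.2
    have hle : ∀ s ∈ S, w s * g' s ≤ w s * fMax S hS g' := fun s hs =>
      mul_le_mul_of_nonneg_left (Finset.le_sup' (g' : E → ℝ) hs) (hw0 s hs)
    have hstrict : w s₀ * g' s₀ < w s₀ * fMax S hS g' :=
      mul_lt_mul_of_pos_left hlt' hs₀w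
    have hsum : ∑ s ∈ S, w s * g' s < ∑ s ∈ S, w s * fMax S hS g' :=
      Finset.sum_lt_sum (fun s hs => hle s hs) ⟨s₀, hs₀S, hstrict⟩
    have h2 : ∑ s ∈ S, w s * fMax S hS g' = fMax S hS g' := by
      rw [← Finset.sum_mul, hw1, one_mul]
    have h3 : g' x = ∑ s ∈ S, w s * g' s := by
      rw [← hwx]
      exact affine_apply_centerMass g' hw1
    exact absurd hg'x (ne_of_lt (by rw [h3]; exact hsum.trans_eq h2))

lemma exists_extreme_gen [DecidableEq E] : ∀ S : Finset E, S.Nonempty →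
    ∃ T : Finset E, T.Nonempty ∧ (T : Set E) ⊆ (convexHull ℝ (S : Set E)).extremePoints ℝ ∧
      convexHull ℝ (T : Set E) = convexHull ℝ (S : Set E) := by
  classical
  intro S
  induction S using Finset.strongInduction with
  | _ S ih =>
    intro hS
    by_cases hc : ∃ s ∈ S, s ∈ convexHull ℝ ((S.erase s : Finset E) : Set E)
    · obtain ⟨s, hsS, hs⟩ := hc
      have herase_ne : (S.erase s).Nonempty := by
        by_contra hcon
        rw [Finset.not_nonempty_iff_eq_empty] at hcon
        rw [hcon] at hs
        simpa using hs
      have hull_eq : convexHull ℝ ((S.erase s : Finset E) : Set E) = convexHull ℝ (S : Set E) := by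
        apply Subset.antisymm (convexHull_mono (by exact_mod_cast Finset.erase_subset s S))
        apply convexHull_min ?_ (convex_convexHull ℝ _)
        intro z hz
        by_cases hzs : z = s
        · rw [hzs]; exact hs
        · exact subset_convexHull ℝ _
            (by exact_mod_cast Finset.mem_erase.2 ⟨hzs, by exact_mod_cast hz⟩)
      obtain ⟨T, hTne, hText, hThull⟩ := ih (S.erase s) (Finset.erase_ssubset hsS) herase_ne
      rw [hull_eq] at hText hThull
      exact ⟨T, hTne, hText, hThull⟩
    · push_neg at hc
      refine ⟨S, hS, ?_, rfl⟩
      intro u huS'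
      have huS : u ∈ S := by exact_mod_cast huS'
      exact mem_extremePoints_of_not_mem_erase huS (hc u huS)


end Stmt9Proof

open Stmt9Proof in
/-- A d-polytope P (d ≥ 1) is a pyramid with apex v iff exactly one facet
of P does not contain the vertex v. -/
theorem stmt9 {E : Type*} [AddCommGroup E] [Module ℝ E]
    (P : Set E) (hP : IsPolytope P) (hd : 1 ≤ pdim P)
    (v : E) (hv : v ∈ P.extremePoints ℝ) :
    IsPyramidWithApex P v ↔ {A : Set E | IsFacet P A ∧ v ∉ A}.ncard = 1 := by
  classical
  obtain ⟨S, hSne, rfl⟩ := hP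
  constructor
  · rintro ⟨Q, ⟨TQ, hTQne, hQeq⟩, hdim, hvQ, hPeq⟩
    have hQne : Q.Nonempty := by
      rw [hQeq]
      obtain ⟨t, ht⟩ := hTQne
      exact ⟨t, subset_convexHull ℝ _ (by exact_mod_cast ht)⟩
    obtain ⟨gq, hg0, hg1⟩ := exists_affine_vanishing hQne hvQ
    have hunion : Q ∪ {v} = insert v Q := Set.union_singleton
    have hQhull : convexHull ℝ Q = Q := by
      rw [hQeq]; exact (convex_convexHull ℝ _).convexHull_eq
    have hPdesc : ∀ x ∈ convexHull ℝ (S : Set E), ∃ z ∈ Q, x ∈ segment ℝ v z := by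
      intro x hx
      rw [hPeq, hunion, convexHull_insert hQne] at hx
      rw [mem_convexJoin] at hx
      obtain ⟨a, ha, b, hb, hseg⟩ := hx
      rw [Set.mem_singleton_iff] at ha
      subst ha
      exact ⟨b, by rwa [hQhull] at hb, hseg⟩
    have hQ0 : ∀ z ∈ Q, gq z = 0 := fun z hz => hg0 z (subset_affineSpan ℝ Q hz)
    have hkey : ∀ x ∈ convexHull ℝ (S : Set E), 0 ≤ gq x ∧ (gq x = 0 → x ∈ Q) := by
      intro x hx
      obtain ⟨z, hzQ, ⟨a, b, ha, hb, hab, hxeq⟩⟩ := hPdesc x hx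
      have hgx : gq x = a := by
        rw [← hxeq, combo_apply gq v z hab, hg1, hQ0 z hzQ]; ring
      refine ⟨by rw [hgx]; exact ha, ?_⟩
      intro h0
      rw [hgx] at h0
      have hb1 : b = 1 := by linarith
      have : x = z := by rw [← hxeq, h0, hb1]; simp
      rw [this]; exact hzQ
    have hQP : Q ⊆ convexHull ℝ (S : Set E) := by
      rw [hPeq]; exact fun z hz => subset_convexHull ℝ _ (Or.inl hz)
    have hvP : v ∈ convexHull ℝ (S : Set E) := hv.1
    have hQext : IsExtreme ℝ (convexHull ℝ (S : Set E)) Q := by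
      refine ⟨hQP, ?_⟩
      rintro x₁ h₁ x₂ h₂ x hxQ ⟨a, b, ha, hb, hab, hxeq⟩
      have hx12 : a * gq x₁ + b * gq x₂ = 0 := by
        rw [← combo_apply gq x₁ x₂ hab, hxeq, hQ0 x hxQ]
      have hg1' := (hkey x₁ h₁).1
      have hg2' := (hkey x₂ h₂).1
      have e1 : gq x₁ = 0 := by nlinarith
      have e2 : gq x₂ = 0 := by nlinarith
      exact (hkey x₁ h₁).2 e1
    have hvnQ : v ∉ Q := fun hvQ' => hvQ (subset_affineSpan ℝ Q hvQ')
    have hQfacet : IsFacet (convexHull ℝ (S : Set E)) Q :=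
      ⟨hQne, ⟨hQext, by rw [hQeq]; exact convex_convexHull ℝ _⟩, hdim⟩
    have hset : {A : Set E | IsFacet (convexHull ℝ (S : Set E)) A ∧ v ∉ A} = {Q} := by
      apply Subset.antisymm
      · rintro A ⟨hAf, hAv⟩
        have hAQ : A ⊆ Q := by
          intro a ha
          have haP : a ∈ convexHull ℝ (S : Set E) := hAf.2.1.1.1 ha
          obtain ⟨z, hzQ, ⟨c, b, hc, hb, hcb, haeq⟩⟩ := hPdesc a haP
          rcases eq_or_lt_of_le hc with hc0 | hcpos
          · have hb1 : b = 1 := by linarith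
            have : a = z := by rw [← haeq, ← hc0, hb1]; simp
            rw [this]; exact hzQ
          · rcases eq_or_lt_of_le hb with hb0 | hbpos
            · have hc1 : c = 1 := by linarith
              have : a = v := by rw [← haeq, ← hb0, hc1]; simp
              rw [this] at ha
              exact absurd ha hAv
            · have hseg : a ∈ openSegment ℝ v z := ⟨c, b, hcpos, hbpos, hcb, haeq⟩
              have := hAf.2.1.1.2 hvP (hQP hzQ) ha hseg
              exact absurd this hAv
        have hAint : IsExtreme ℝ (convexHull ℝ (TQ : Set E)) A := by
          rw [← hQeq]
          exact extreme_shrink hAf.2.1.1 hAQ hQP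
        have hdimA : pdim (convexHull ℝ (TQ : Set E)) ≤ pdim A := by
          rw [← hQeq]
          have e1 : pdim A + 1 = pdim (convexHull ℝ (S : Set E)) := hAf.2.2
          omega
        have hfinal := extreme_eq_self_of_pdim_le hAint hAf.2.1.2 hAf.1 hdimA
        rw [← hQeq] at hfinal
        exact hfinal
      · intro A hA
        rw [Set.mem_singleton_iff] at hA
        subst hA
        exact ⟨hQfacet, hvnQ⟩
    rw [hset]
    exact Set.ncard_singleton Q
  · intro hcard
    obtain ⟨Fc, hFc⟩ := Set.ncard_eq_one.1 hcard
    have hFmem : IsFacet (convexHull ℝ (S : Set E)) Fc ∧ v ∉ Fc := by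
      have : Fc ∈ {A : Set E | IsFacet (convexHull ℝ (S : Set E)) A ∧ v ∉ A} := by
        rw [hFc]; exact Set.mem_singleton Fc
      exact this
    obtain ⟨hFfacet, hFv⟩ := hFmem
    obtain ⟨T, hTne, hText, hThull⟩ := exists_extreme_gen S hSne
    have hTF : ∀ u ∈ (T : Set E), u ≠ v → u ∈ Fc := by
      intro u huT hune
      by_contra huF
      obtain ⟨G, hGfacet, hGu, hGv⟩ :=
        exists_facet_sep hSne (hText huT) hv.1 (fun h => hune h.symm) hd
      have hGmem : G ∈ {A : Set E | IsFacet (convexHull ℝ (S : Set E)) A ∧ v ∉ A} :=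
        ⟨hGfacet, hGv⟩
      rw [hFc, Set.mem_singleton_iff] at hGmem
      rw [hGmem] at hGu
      exact huF hGu
    have hPFv : convexHull ℝ (S : Set E) = convexHull ℝ (Fc ∪ {v}) := by
      apply Subset.antisymm
      · rw [← hThull]
        apply convexHull_mono
        intro z hz
        by_cases hzv : z = v
        · exact Or.inr (by rw [hzv]; rfl)
        · exact Or.inl (hTF z hz hzv)
      · apply convexHull_min ?_ (convex_convexHull ℝ _)
        rintro z (hzF | hzv)
        · exact hFfacet.2.1.1.1 hzF
        · rw [Set.mem_singleton_iff] at hzv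
          rw [hzv]; exact hv.1
    have hFhull : Fc = convexHull ℝ ((S : Set E) ∩ Fc) :=
      extreme_eq_convexHull_inter hFfacet.2.1.1 hFfacet.2.1.2
    have hcoe : ((S.filter (fun s => s ∈ Fc) : Finset E) : Set E) = (S : Set E) ∩ Fc := by
      ext z; simp [Finset.mem_filter]
    have hFpoly : IsPolytope Fc := by
      refine ⟨S.filter (fun s => s ∈ Fc), ?_, by rw [hcoe]; exact hFhull⟩
      obtain ⟨a, ha⟩ := hFfacet.1
      have hmem : a ∈ convexHull ℝ ((S : Set E) ∩ Fc) := by rw [← hFhull]; exact ha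
      by_contra hcon
      rw [Finset.not_nonempty_iff_eq_empty] at hcon
      rw [← hcoe, hcon] at hmem
      simpa using hmem
    have hvspan : v ∉ affineSpan ℝ Fc := by
      intro hmem
      have hsub2 : (Fc ∪ {v} : Set E) ⊆ (affineSpan ℝ Fc : Set E) := by
        rintro z (hz | hz)
        · exact subset_affineSpan ℝ _ hz
        · rw [Set.mem_singleton_iff] at hz
          rw [hz]; exact hmem
      have hle : affineSpan ℝ (Fc ∪ {v}) ≤ affineSpan ℝ Fc := affineSpan_le.2 hsub2
      have hge : affineSpan ℝ Fc ≤ affineSpan ℝ (Fc ∪ {v}) :=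
        affineSpan_mono ℝ Set.subset_union_left
      have hspaneq : affineSpan ℝ (Fc ∪ {v}) = affineSpan ℝ Fc := le_antisymm hle hge
      have hpd : pdim (convexHull ℝ (S : Set E)) = pdim Fc := by
        rw [hPFv, pdim_convexHull]
        unfold pdim
        rw [hspaneq]
      have hp2 := hFfacet.2.2
      omega
    exact ⟨Fc, hFpoly, hFfacet.2.2, hvspan, hPFv⟩
end

section
/- A join P ∗ Q of two polytopes, each of dimension ≥ 1, is a pyramid if and only if P is a pyramid or Q is a pyramid. -/
open Set

/-! ### Auxiliary lemmas -/

section AuxGen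

variable {G : Type*} [AddCommGroup G] [Module ℝ G]

/-- A point of a finite set that is not in the convex hull of the other points is an
extreme point of the convex hull. -/
lemma auxA_mem_extremePoints (S : Finset G) {x : G} (hx : x ∈ S)
    (h : x ∉ convexHull ℝ ((S : Set G) \ {x})) :
    x ∈ (convexHull ℝ (S : Set G)).extremePoints ℝ := by
  classical
  rw [← Finset.coe_erase] at h
  rw [mem_extremePoints_iff_forall_segment]
  refine ⟨subset_convexHull ℝ _ hx, ?_⟩
  intro x₁ h₁ x₂ h₂ hseg
  rw [Finset.convexHull_eq] at h₁ h₂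
  obtain ⟨w₁, hw₁0, hw₁s, hw₁c⟩ := h₁
  obtain ⟨w₂, hw₂0, hw₂s, hw₂c⟩ := h₂
  obtain ⟨t, s, ht, hs, hts, heq⟩ := hseg
  set w : G → ℝ := fun y => t * w₁ y + s * w₂ y with hw_def
  have hw0 : ∀ y ∈ S, 0 ≤ w y := fun y hy =>
    add_nonneg (mul_nonneg ht (hw₁0 y hy)) (mul_nonneg hs (hw₂0 y hy))
  have hws : ∑ y ∈ S, w y = 1 := by
    simp only [hw_def, Finset.sum_add_distrib, ← Finset.mul_sum, hw₁s, hw₂s]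
    linarith
  have e₁ : x₁ = ∑ y ∈ S, w₁ y • y := by
    rw [← hw₁c, Finset.centerMass_eq_of_sum_1 _ _ hw₁s]; rfl
  have e₂ : x₂ = ∑ y ∈ S, w₂ y • y := by
    rw [← hw₂c, Finset.centerMass_eq_of_sum_1 _ _ hw₂s]; rfl
  have hwc : ∑ y ∈ S, w y • y = x := by
    rw [← heq, e₁, e₂, Finset.smul_sum, Finset.smul_sum, ← Finset.sum_add_distrib]
    exact Finset.sum_congr rfl fun y _ => by simp [hw_def, add_smul, mul_smul]
  have hμle : ∀ (u : G → ℝ), (∀ y ∈ S, 0 ≤ u y) → (∑ y ∈ S, u y = 1) → u x ≤ 1 := by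
    intro u hu0 hus
    rw [← hus]
    exact Finset.single_le_sum hu0 hx
  have hsum_split : w x + ∑ y ∈ S.erase x, w y = 1 := by
    rw [Finset.add_sum_erase S w hx]; exact hws
  have hsmul_split : w x • x + ∑ y ∈ S.erase x, w y • y = x := by
    rw [Finset.add_sum_erase S (fun y => w y • y) hx]; exact hwc
  have hμ : w x = 1 := by
    by_contra hne
    have hlt : w x < 1 := lt_of_le_of_ne (hμle w hw0 hws) hne
    have hpos : 0 < 1 - w x := by linarith
    apply h
    have hmem : (S.erase x).centerMass w id ∈ convexHull ℝ (↑(S.erase x) : Set G) :=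
      Finset.centerMass_id_mem_convexHull _ (fun y hy => hw0 y (Finset.mem_of_mem_erase hy))
        (by rw [show ∑ y ∈ S.erase x, w y = 1 - w x by linarith]; exact hpos)
    have hcm : (S.erase x).centerMass w id = x := by
      rw [Finset.centerMass, show ∑ y ∈ S.erase x, w y = 1 - w x by linarith]
      have hsum : ∑ y ∈ S.erase x, w y • (id y) = (1 - w x) • x := by
        simp only [id]
        have : ∑ y ∈ S.erase x, w y • y = x - w x • x := by
          rw [eq_sub_iff_add_eq, add_comm]; exact hsmul_split
        rw [this, sub_smul, one_smul]
      rw [hsum, smul_smul, inv_mul_cancel₀ (by linarith), one_smul]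
    rwa [hcm] at hmem
  rcases eq_or_lt_of_le ht with ht0 | htpos
  · right
    have hs1 : s = 1 := by linarith
    rw [← heq, ← ht0, hs1, zero_smul, one_smul, zero_add]
  · left
    have hw₁x : w₁ x = 1 := by
      have h1 : w₁ x ≤ 1 := hμle w₁ hw₁0 hw₁s
      have h2 : w₂ x ≤ 1 := hμle w₂ hw₂0 hw₂s
      have h3 : t * w₁ x + s * w₂ x = 1 := hμ
      nlinarith
    have hzero : ∀ y ∈ S.erase x, w₁ y = 0 := by
      have hsum : ∑ y ∈ S.erase x, w₁ y = 0 := by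
        have h4 := Finset.add_sum_erase S w₁ hx
        rw [h4.symm] at hw₁s
        linarith [hw₁s]
      intro y hy
      exact (Finset.sum_eq_zero_iff_of_nonneg
        (fun z hz => hw₁0 z (Finset.mem_of_mem_erase hz))).1 hsum y hy
    have : x₁ = w₁ x • x + ∑ y ∈ S.erase x, w₁ y • y := by
      rw [Finset.add_sum_erase S (fun y => w₁ y • y) hx]; exact e₁
    rw [this, hw₁x, one_smul, Finset.sum_congr rfl (fun y hy => by rw [hzero y hy, zero_smul]),
      Finset.sum_const_zero, add_zero]

/-- Minkowski's theorem for polytopes: a polytope is the convex hull of its extreme points. -/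
lemma auxB_minkowski (S : Finset G) :
    convexHull ℝ (S : Set G) =
      convexHull ℝ ((convexHull ℝ (S : Set G)).extremePoints ℝ) := by
  classical
  induction S using Finset.strongInductionOn with
  | _ S ih =>
    by_cases hcase : ∃ s ∈ S, s ∈ convexHull ℝ (↑(S.erase s) : Set G)
    · obtain ⟨s, hsS, hmem⟩ := hcase
      have hsub : convexHull ℝ (S : Set G) = convexHull ℝ (↑(S.erase s) : Set G) := by
        apply Subset.antisymm
        · apply convexHull_min _ (convex_convexHull ℝ _)
          intro y hy
          rcases eq_or_ne y s with rfl | hne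
          · exact hmem
          · exact subset_convexHull ℝ _ (Finset.mem_coe.2 (Finset.mem_erase.2 ⟨hne, hy⟩))
        · exact convexHull_mono (by exact_mod_cast Finset.erase_subset s S)
      rw [hsub]
      exact ih _ (Finset.erase_ssubset hsS)
    · push_neg at hcase
      apply Subset.antisymm
      · apply convexHull_mono
        intro x hx
        exact auxA_mem_extremePoints S hx (by rw [← Finset.coe_erase]; exact hcase x hx)
      · exact convexHull_min (extremePoints_subset) (convex_convexHull ℝ _)

/-- The apex of a pyramid is an extreme point. -/
lemma aux_apex_extreme {s : Set G} (hs : s.Nonempty) {w : G} (hw : w ∉ affineSpan ℝ s) :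
    w ∈ (convexHull ℝ (s ∪ {w})).extremePoints ℝ := by
  have hJ : convexHull ℝ (s ∪ {w}) = convexJoin ℝ (convexHull ℝ s) {w} := by
    rw [convexHull_union hs (singleton_nonempty w), convexHull_singleton]
  rw [mem_extremePoints_iff_forall_segment]
  refine ⟨subset_convexHull ℝ _ (mem_union_right _ rfl), ?_⟩
  intro x₁ h₁ x₂ h₂ hseg
  rw [hJ, mem_convexJoin] at h₁ h₂
  obtain ⟨c₁, hc₁, b₁, hb₁, hx₁⟩ := h₁
  obtain ⟨c₂, hc₂, b₂, hb₂, hx₂⟩ := h₂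
  rw [mem_singleton_iff] at hb₁ hb₂
  rw [hb₁] at hx₁; rw [hb₂] at hx₂
  obtain ⟨α₁, β₁, hα₁, hβ₁, hαβ₁, hx₁e⟩ := hx₁
  obtain ⟨α₂, β₂, hα₂, hβ₂, hαβ₂, hx₂e⟩ := hx₂
  obtain ⟨t, u, ht, hu, htu, heq⟩ := hseg
  rw [← hx₁e, ← hx₂e] at heq
  have hkey : (t * α₁) • c₁ + (u * α₂) • c₂ = (1 - (t * β₁ + u * β₂)) • w := by
    have h1 : t • (α₁ • c₁ + β₁ • w) + u • (α₂ • c₂ + β₂ • w) = w := heq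
    have hβ₁' : β₁ = 1 - α₁ := by linarith
    have hβ₂' : β₂ = 1 - α₂ := by linarith
    have hu' : u = 1 - t := by linarith
    rw [hβ₁', hβ₂', hu'] at h1 ⊢
    linear_combination (norm := module) h1
  set μ : ℝ := t * α₁ + u * α₂ with hμdef
  have hμeq : (1 : ℝ) - (t * β₁ + u * β₂) = μ := by rw [hμdef]; nlinarith
  rcases eq_or_lt_of_le (by positivity : (0:ℝ) ≤ μ) with hμ0 | hμpos
  · have h0 : t * α₁ + u * α₂ = 0 := by rw [← hμdef, ← hμ0]
    have h1 : 0 ≤ t * α₁ := by positivity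
    have h2 : 0 ≤ u * α₂ := by positivity
    have htα : t * α₁ = 0 := by linarith
    have huα : u * α₂ = 0 := by linarith
    rcases eq_or_lt_of_le ht with ht0 | htpos
    · right
      have hu1 : u = 1 := by linarith
      have hα₂0 : α₂ = 0 := by
        rcases mul_eq_zero.1 huα with h | h
        · exfalso; linarith
        · exact h
      rw [← hx₂e, hα₂0, zero_smul, zero_add, show β₂ = 1 by linarith, one_smul]
    · left
      have hα₁0 : α₁ = 0 := by
        rcases mul_eq_zero.1 htα with h | h
        · exfalso; linarith
        · exact h
      rw [← hx₁e, hα₁0, zero_smul, zero_add, show β₁ = 1 by linarith, one_smul]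
  · exfalso
    apply hw
    have hwmem : w ∈ convexHull ℝ s := by
      have hcomb : ((t * α₁) / μ) • c₁ + ((u * α₂) / μ) • c₂ ∈ convexHull ℝ s := by
        apply (convex_convexHull ℝ s) hc₁ hc₂ (by positivity) (by positivity)
        field_simp
        exact hμdef.symm
      have hweq : w = ((t * α₁) / μ) • c₁ + ((u * α₂) / μ) • c₂ := by
        rw [hμeq] at hkey
        have h6 := congrArg (fun z => μ⁻¹ • z) hkey
        simp only [smul_add, smul_smul] at h6
        rw [inv_mul_cancel₀ hμpos.ne', one_smul] at h6
        rw [← h6]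
        congr 1 <;> rw [div_eq_inv_mul]
      rw [hweq]; exact hcomb
    exact convexHull_subset_affineSpan s hwmem

/-- A polytope with an extreme point outside the affine span of the other extreme points
is a pyramid. -/
lemma isPyramid_of_apex {P : Set G} (hP : IsPolytope P) (hd : 1 ≤ pdim P) {v : G}
    (hv : v ∈ P.extremePoints ℝ)
    (h : v ∉ affineSpan ℝ (P.extremePoints ℝ \ {v})) : IsPyramid P := by
  obtain ⟨S, hSne, rfl⟩ := hP
  have hMink := auxB_minkowski S
  set V := (convexHull ℝ (S : Set G)).extremePoints ℝ with hVdef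
  have hVsub : V ⊆ ↑S := extremePoints_convexHull_subset
  have hVfin : (V \ {v}).Finite := (S.finite_toSet.subset hVsub).diff
  have hvV : v ∈ V := hv
  have hVne : (V \ {v}).Nonempty := by
    rw [nonempty_iff_ne_empty]
    intro hne
    rw [diff_eq_empty] at hne
    have hPsub : convexHull ℝ (S : Set G) ⊆ {v} := by
      rw [hMink]
      calc convexHull ℝ V ⊆ convexHull ℝ {v} := convexHull_mono hne
        _ = {v} := convexHull_singleton v
    have hPeq : convexHull ℝ (S : Set G) = {v} :=
      Subset.antisymm hPsub (singleton_subset_iff.2 hv.1)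
    have hd0 : pdim (convexHull ℝ (S : Set G)) = 0 := by
      rw [hPeq]
      unfold pdim
      rw [direction_affineSpan, vectorSpan_singleton]
      exact finrank_bot ℝ G
    omega
  refine ⟨convexHull ℝ (V \ {v}), v, ⟨hVfin.toFinset, ?_, by rw [hVfin.coe_toFinset]⟩, ?_, ?_⟩
  · rwa [← hVfin.toFinset_nonempty] at hVne
  · rwa [affineSpan_convexHull]
  · rw [convexHull_convexHull_union_left, diff_union_of_subset (singleton_subset_iff.2 hvV)]
    exact hMink

end AuxGen

section AuxJoin

variable {E : Type*} [AddCommGroup E] [Module ℝ E] {F : Type*} [AddCommGroup F] [Module ℝ F]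

/-- The linear embedding of the first factor. -/
def jf : E →ₗ[ℝ] E × F × ℝ := LinearMap.inl ℝ E (F × ℝ)

lemma jf_apply (p : E) : (jf p : E × F × ℝ) = (p, (0 : F), (0 : ℝ)) := rfl

/-- The affine embedding of the second factor. -/
noncomputable def jg : F →ᵃ[ℝ] E × F × ℝ where
  toFun := fun q => ((0 : E), q, (1 : ℝ))
  linear := ((0 : F →ₗ[ℝ] E).prod ((LinearMap.id : F →ₗ[ℝ] F).prod (0 : F →ₗ[ℝ] ℝ)))
  map_vadd' := by
    intro p v
    simp [Prod.ext_iff]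

lemma jg_apply (q : F) : (jg q : E × F × ℝ) = ((0 : E), q, (1 : ℝ)) := rfl

lemma jf_image (s : Set E) :
    ((fun p => (p, (0 : F), (0 : ℝ))) '' s : Set (E × F × ℝ)) =
      ⇑(jf : E →ₗ[ℝ] E × F × ℝ) '' s := rfl

lemma jg_image (s : Set F) :
    ((fun q => ((0 : E), q, (1 : ℝ))) '' s : Set (E × F × ℝ)) =
      ⇑(jg : F →ᵃ[ℝ] E × F × ℝ) '' s := rfl

lemma polyJoin_eq (P : Set E) (Q : Set F) :
    polyJoin P Q = convexHull ℝ ((jf '' P : Set (E × F × ℝ)) ∪ ⇑jg '' Q) := rfl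

lemma mem_polyJoin_iff {P : Set E} {Q : Set F} (hPc : Convex ℝ P) (hQc : Convex ℝ Q)
    (hPne : P.Nonempty) (hQne : Q.Nonempty) {z : E × F × ℝ} :
    z ∈ polyJoin P Q ↔ ∃ p ∈ P, ∃ q ∈ Q, ∃ a b : ℝ,
      0 ≤ a ∧ 0 ≤ b ∧ a + b = 1 ∧ z = (a • p, b • q, b) := by
  rw [polyJoin_eq, convexHull_union (hPne.image _) (hQne.image _),
    ((hPc.linear_image jf)).convexHull_eq, ((hQc.affine_image jg)).convexHull_eq,
    mem_convexJoin]
  constructor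
  · rintro ⟨x, ⟨p, hp, rfl⟩, y, ⟨q, hq, rfl⟩, a, b, ha, hb, hab, rfl⟩
    exact ⟨p, hp, q, hq, a, b, ha, hb, hab, by
      simp [jf_apply, jg_apply, Prod.ext_iff, smul_eq_mul]⟩
  · rintro ⟨p, hp, q, hq, a, b, ha, hb, hab, rfl⟩
    refine ⟨jf p, mem_image_of_mem _ hp, jg q, mem_image_of_mem _ hq, a, b, ha, hb, hab, ?_⟩
    simp [jf_apply, jg_apply, Prod.ext_iff, smul_eq_mul]

lemma jf_mem_polyJoin {P : Set E} {Q : Set F} {p : E} (hp : p ∈ P) :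
    (jf p : E × F × ℝ) ∈ polyJoin P Q :=
  subset_convexHull ℝ _ (mem_union_left _ (mem_image_of_mem _ hp))

lemma jg_mem_polyJoin {P : Set E} {Q : Set F} {q : F} (hq : q ∈ Q) :
    (jg q : E × F × ℝ) ∈ polyJoin P Q :=
  subset_convexHull ℝ _ (mem_union_right _ (mem_image_of_mem _ hq))

lemma extreme_jf {P : Set E} {Q : Set F} (hPc : Convex ℝ P) (hQc : Convex ℝ Q)
    (hPne : P.Nonempty) (hQne : Q.Nonempty) {p : E} (hp : p ∈ P.extremePoints ℝ) :
    (jf p : E × F × ℝ) ∈ (polyJoin P Q).extremePoints ℝ := by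
  refine ⟨jf_mem_polyJoin hp.1, ?_⟩
  intro x₁ h₁ x₂ h₂ hseg
  rw [mem_polyJoin_iff hPc hQc hPne hQne] at h₁ h₂
  obtain ⟨p₁, hp₁, q₁, hq₁, a₁, b₁, ha₁, hb₁, hab₁, rfl⟩ := h₁
  obtain ⟨p₂, hp₂, q₂, hq₂, a₂, b₂, ha₂, hb₂, hab₂, rfl⟩ := h₂
  obtain ⟨t, u, ht, hu, htu, heq⟩ := hseg
  rw [jf_apply, Prod.ext_iff, Prod.ext_iff] at heq
  simp only [Prod.fst_add, Prod.snd_add, Prod.smul_fst, Prod.smul_snd, smul_eq_mul] at heq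
  obtain ⟨heq1, heq2, heq3⟩ := heq
  have hb₁0 : b₁ = 0 := by nlinarith
  have hb₂0 : b₂ = 0 := by nlinarith
  have ha₁1 : a₁ = 1 := by linarith
  have ha₂1 : a₂ = 1 := by linarith
  rw [ha₁1, ha₂1, one_smul, one_smul] at heq1
  have h5 := hp.2 hp₁ hp₂ ⟨t, u, ht, hu, htu, heq1⟩
  simp only [jf_apply, Prod.ext_iff, h5, hb₁0, hb₂0, ha₁1, ha₂1, zero_smul, one_smul]

lemma extreme_jg {P : Set E} {Q : Set F} (hPc : Convex ℝ P) (hQc : Convex ℝ Q)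
    (hPne : P.Nonempty) (hQne : Q.Nonempty) {q : F} (hq : q ∈ Q.extremePoints ℝ) :
    (jg q : E × F × ℝ) ∈ (polyJoin P Q).extremePoints ℝ := by
  refine ⟨jg_mem_polyJoin hq.1, ?_⟩
  intro x₁ h₁ x₂ h₂ hseg
  rw [mem_polyJoin_iff hPc hQc hPne hQne] at h₁ h₂
  obtain ⟨p₁, hp₁, q₁, hq₁, a₁, b₁, ha₁, hb₁, hab₁, rfl⟩ := h₁
  obtain ⟨p₂, hp₂, q₂, hq₂, a₂, b₂, ha₂, hb₂, hab₂, rfl⟩ := h₂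
  obtain ⟨t, u, ht, hu, htu, heq⟩ := hseg
  rw [jg_apply, Prod.ext_iff, Prod.ext_iff] at heq
  simp only [Prod.fst_add, Prod.snd_add, Prod.smul_fst, Prod.smul_snd, smul_eq_mul] at heq
  obtain ⟨heq1, heq2, heq3⟩ := heq
  have hb₁1 : b₁ = 1 := by nlinarith
  have hb₂1 : b₂ = 1 := by nlinarith
  have ha₁0 : a₁ = 0 := by linarith
  have ha₂0 : a₂ = 0 := by linarith
  rw [hb₁1, one_smul, hb₂1, one_smul] at heq2
  have h5 := hq.2 hq₁ hq₂ ⟨t, u, ht, hu, htu, heq2⟩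
  simp only [jg_apply, Prod.ext_iff, h5, ha₁0, ha₂0, hb₁1, hb₂1, zero_smul, one_smul]

lemma extreme_jf_rev {P : Set E} {Q : Set F} {v : E} (hv : v ∈ P)
    (hw : (jf v : E × F × ℝ) ∈ (polyJoin P Q).extremePoints ℝ) :
    v ∈ P.extremePoints ℝ := by
  refine ⟨hv, ?_⟩
  intro x₁ h₁ x₂ h₂ hseg
  obtain ⟨t, u, ht, hu, htu, heq⟩ := hseg
  have hseg' : (jf v : E × F × ℝ) ∈ openSegment ℝ (jf x₁ : E × F × ℝ) (jf x₂) := by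
    refine ⟨t, u, ht, hu, htu, ?_⟩
    rw [← heq]
    simp [jf_apply, Prod.ext_iff, smul_eq_mul]
  have h5 := hw.2 (jf_mem_polyJoin h₁) (jf_mem_polyJoin h₂) hseg'
  exact congrArg Prod.fst h5

lemma extreme_jg_rev {P : Set E} {Q : Set F} {u : F} (hu : u ∈ Q)
    (hw : (jg u : E × F × ℝ) ∈ (polyJoin P Q).extremePoints ℝ) :
    u ∈ Q.extremePoints ℝ := by
  refine ⟨hu, ?_⟩
  intro x₁ h₁ x₂ h₂ hseg
  obtain ⟨t, s, ht, hs, hts, heq⟩ := hseg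
  have hseg' : (jg u : E × F × ℝ) ∈ openSegment ℝ (jg x₁ : E × F × ℝ) (jg x₂) := by
    refine ⟨t, s, ht, hs, hts, ?_⟩
    rw [← heq]
    simp [jg_apply, Prod.ext_iff, smul_eq_mul]
    linarith
  have h5 := hw.2 (jg_mem_polyJoin h₁) (jg_mem_polyJoin h₂) hseg'
  exact congrArg (fun z : E × F × ℝ => z.2.1) h5

/-- Linear retraction used for the first factor. -/
def philin (p₀ : E) : E × F × ℝ →ₗ[ℝ] E where
  toFun := fun z => z.1 + z.2.2 • p₀
  map_add' := by
    intro a b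
    simp only [Prod.fst_add, Prod.snd_add, add_smul]
    abel
  map_smul' := by
    intro r a
    simp only [Prod.smul_fst, Prod.smul_snd, smul_eq_mul, RingHom.id_apply, smul_add,
      mul_smul]

/-- Affine retraction used for the second factor. -/
noncomputable def psiaff (q₀ : F) : E × F × ℝ →ᵃ[ℝ] F where
  toFun := fun z => z.2.1 + (1 - z.2.2) • q₀
  linear :=
    { toFun := fun z => z.2.1 - z.2.2 • q₀
      map_add' := by
        intro a b
        simp only [Prod.fst_add, Prod.snd_add, add_smul]
        abel
      map_smul' := by
        intro r a
        simp only [Prod.smul_fst, Prod.smul_snd, smul_eq_mul, RingHom.id_apply, smul_sub,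
          mul_smul] }
  map_vadd' := by
    intro p v
    simp only [vadd_eq_add, Prod.fst_add, Prod.snd_add, LinearMap.coe_mk, AddHom.coe_mk]
    module

end AuxJoin

/-- A join of two polytopes, each of dimension at least 1, is a pyramid
iff one of the two factors is a pyramid. -/
theorem stmt19 {E : Type*} [AddCommGroup E] [Module ℝ E] {F : Type*} [AddCommGroup F] [Module ℝ F]
    (P : Set E) (Q : Set F) (hP : IsPolytope P) (hQ : IsPolytope Q)
    (hdP : 1 ≤ pdim P) (hdQ : 1 ≤ pdim Q) :
    IsPyramid (polyJoin P Q) ↔ IsPyramid P ∨ IsPyramid Q := by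
  classical
  obtain ⟨S, hSne, hPS⟩ := hP
  obtain ⟨T, hTne, hQT⟩ := hQ
  have hPc : Convex ℝ P := hPS ▸ convex_convexHull ℝ _
  have hQc : Convex ℝ Q := hQT ▸ convex_convexHull ℝ _
  have hPne : P.Nonempty := by
    obtain ⟨s₀, hs₀⟩ := hSne
    exact ⟨s₀, hPS ▸ subset_convexHull ℝ _ hs₀⟩
  have hQne : Q.Nonempty := by
    obtain ⟨t₀, ht₀⟩ := hTne
    exact ⟨t₀, hQT ▸ subset_convexHull ℝ _ ht₀⟩
  constructor
  · -- forward direction: the join is a pyramid → P or Q is a pyramid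
    rintro ⟨B, w, hBpoly, hwB, hJeq⟩
    have hBne : B.Nonempty := by
      obtain ⟨SB, hSBne, hBeq⟩ := hBpoly
      obtain ⟨x, hx⟩ := hSBne
      exact ⟨x, hBeq ▸ subset_convexHull ℝ _ hx⟩
    have hwext : w ∈ (polyJoin P Q).extremePoints ℝ := by
      rw [hJeq]; exact aux_apex_extreme hBne hwB
    have hwmem : w ∈ (⇑(jf : E →ₗ[ℝ] E × F × ℝ) '' P ∪ ⇑(jg : F →ᵃ[ℝ] E × F × ℝ) '' Q) := by
      have := hwext
      rw [polyJoin_eq] at this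
      exact extremePoints_convexHull_subset this
    have hextBW : (polyJoin P Q).extremePoints ℝ ⊆ B ∪ {w} := by
      rw [hJeq]; exact extremePoints_convexHull_subset
    rcases hwmem with ⟨v, hvP, rfl⟩ | ⟨u, huQ, rfl⟩
    · -- the apex is on the P side
      left
      have hvext : v ∈ P.extremePoints ℝ := extreme_jf_rev hvP hwext
      apply isPyramid_of_apex ⟨S, hSne, hPS⟩ hdP hvext
      intro hvmem
      apply hwB
      have h1 : (jf v : E × F × ℝ) ∈
          affineSpan ℝ (⇑(jf : E →ₗ[ℝ] E × F × ℝ) '' (P.extremePoints ℝ \ {v})) := by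
        have hmap := AffineSubspace.mem_map_of_mem
          (f := (jf : E →ₗ[ℝ] E × F × ℝ).toAffineMap) hvmem
        rw [AffineSubspace.map_span] at hmap
        exact hmap
      have h2 : (⇑(jf : E →ₗ[ℝ] E × F × ℝ) '' (P.extremePoints ℝ \ {v}) : Set (E × F × ℝ))
          ⊆ (affineSpan ℝ B : Set (E × F × ℝ)) := by
        rintro _ ⟨p, ⟨hpext, hpne⟩, rfl⟩
        have hmem : (jf p : E × F × ℝ) ∈ B ∪ {jf v} :=
          hextBW (extreme_jf hPc hQc hPne hQne hpext)
        rcases hmem with hB | hsing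
        · exact subset_affineSpan ℝ B hB
        · exact absurd (congrArg Prod.fst hsing) hpne
      exact affineSpan_le.2 h2 h1
    · -- the apex is on the Q side
      right
      have huext : u ∈ Q.extremePoints ℝ := extreme_jg_rev huQ hwext
      apply isPyramid_of_apex ⟨T, hTne, hQT⟩ hdQ huext
      intro humem
      apply hwB
      have h1 : (jg u : E × F × ℝ) ∈
          affineSpan ℝ (⇑(jg : F →ᵃ[ℝ] E × F × ℝ) '' (Q.extremePoints ℝ \ {u})) := by
        rw [← AffineSubspace.map_span jg]
        exact AffineSubspace.mem_map_of_mem _ humem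
      have h2 : (⇑(jg : F →ᵃ[ℝ] E × F × ℝ) '' (Q.extremePoints ℝ \ {u}) : Set (E × F × ℝ))
          ⊆ (affineSpan ℝ B : Set (E × F × ℝ)) := by
        rintro _ ⟨q, ⟨hqext, hqne⟩, rfl⟩
        have hmem : (jg q : E × F × ℝ) ∈ B ∪ {jg u} :=
          hextBW (extreme_jg hPc hQc hPne hQne hqext)
        rcases hmem with hB | hsing
        · exact subset_affineSpan ℝ B hB
        · exact absurd (congrArg (fun z : E × F × ℝ => z.2.1) hsing) hqne
      exact affineSpan_le.2 h2 h1
  · -- reverse direction: P or Q a pyramid → the join is a pyramid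
    rintro (⟨P', v, hP'poly, hvaff, hPeq⟩ | ⟨Q', u, hQ'poly, huaff, hQeq⟩)
    · -- P is a pyramid with base P' and apex v
      obtain ⟨S', hS'ne, hP'eq⟩ := hP'poly
      obtain ⟨p₀, hp₀S⟩ := hS'ne
      have hp₀ : p₀ ∈ P' := hP'eq ▸ subset_convexHull ℝ _ hp₀S
      refine ⟨convexHull ℝ (⇑(jf : E →ₗ[ℝ] E × F × ℝ) '' P' ∪ ⇑(jg : F →ᵃ[ℝ] E × F × ℝ) '' Q),
        jf v, ?_, ?_, ?_⟩
      · -- the base is a polytope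
        refine ⟨S'.image (fun p => ((p, 0, 0) : E × F × ℝ)) ∪
          T.image (fun q => ((0, q, 1) : E × F × ℝ)), ?_, ?_⟩
        · exact Finset.Nonempty.inl (⟨_, Finset.mem_image_of_mem _ hp₀S⟩)
        · rw [Finset.coe_union, Finset.coe_image, Finset.coe_image]
          rw [jf_image, jg_image]
          have e1 : (⇑(jf : E →ₗ[ℝ] E × F × ℝ) '' P' : Set (E × F × ℝ)) =
              convexHull ℝ (⇑(jf : E →ₗ[ℝ] E × F × ℝ) '' ↑S') := by
            rw [hP'eq]; exact LinearMap.image_convexHull _ _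
          have e2 : (⇑(jg : F →ᵃ[ℝ] E × F × ℝ) '' Q : Set (E × F × ℝ)) =
              convexHull ℝ (⇑(jg : F →ᵃ[ℝ] E × F × ℝ) '' ↑T) := by
            rw [hQT]; exact AffineMap.image_convexHull _ _
          rw [e1, e2, convexHull_convexHull_union_left, convexHull_convexHull_union_right]
      · -- the apex is outside the affine span of the base
        rw [affineSpan_convexHull]
        intro hmem
        apply hvaff
        have h1 : philin (F := F) p₀ (jf v) ∈
            (affineSpan ℝ (⇑(jf : E →ₗ[ℝ] E × F × ℝ) '' P' ∪
              ⇑(jg : F →ᵃ[ℝ] E × F × ℝ) '' Q)).map (philin (F := F) p₀).toAffineMap :=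
          AffineSubspace.mem_map_of_mem _ hmem
        rw [AffineSubspace.map_span] at h1
        have h2 : (⇑(philin (F := F) p₀).toAffineMap ''
            (⇑(jf : E →ₗ[ℝ] E × F × ℝ) '' P' ∪ ⇑(jg : F →ᵃ[ℝ] E × F × ℝ) '' Q) : Set E)
            ⊆ (affineSpan ℝ P' : Set E) := by
          rintro _ ⟨z, hz, rfl⟩
          rcases hz with ⟨p, hp, rfl⟩ | ⟨q, hq, rfl⟩
          · have : philin (F := F) p₀ (jf p) = p := by
              simp [philin, jf_apply]
            rw [LinearMap.coe_toAffineMap, this]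
            exact subset_affineSpan ℝ P' hp
          · have : philin (F := F) p₀ (jg q) = p₀ := by
              simp [philin, jg_apply]
            rw [LinearMap.coe_toAffineMap, this]
            exact subset_affineSpan ℝ P' hp₀
        have h3 : philin (F := F) p₀ (jf v) = v := by simp [philin, jf_apply]
        rw [h3] at h1
        exact affineSpan_le.2 h2 h1
      · -- the join is the pyramid over the base with this apex
        rw [polyJoin_eq, convexHull_convexHull_union_left, union_right_comm]
        have e1 : (⇑(jf : E →ₗ[ℝ] E × F × ℝ) '' P : Set (E × F × ℝ)) =
            convexHull ℝ (⇑(jf : E →ₗ[ℝ] E × F × ℝ) '' P' ∪ {jf v}) := by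
          rw [hPeq, ← image_singleton, ← image_union, ← LinearMap.image_convexHull]
        rw [e1, convexHull_convexHull_union_left]
    · -- Q is a pyramid with base Q' and apex u
      obtain ⟨T', hT'ne, hQ'eq⟩ := hQ'poly
      obtain ⟨q₀, hq₀T⟩ := hT'ne
      have hq₀ : q₀ ∈ Q' := hQ'eq ▸ subset_convexHull ℝ _ hq₀T
      refine ⟨convexHull ℝ (⇑(jf : E →ₗ[ℝ] E × F × ℝ) '' P ∪ ⇑(jg : F →ᵃ[ℝ] E × F × ℝ) '' Q'),
        jg u, ?_, ?_, ?_⟩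
      · refine ⟨S.image (fun p => ((p, 0, 0) : E × F × ℝ)) ∪
          T'.image (fun q => ((0, q, 1) : E × F × ℝ)), ?_, ?_⟩
        · exact Finset.Nonempty.inr (⟨_, Finset.mem_image_of_mem _ hq₀T⟩)
        · rw [Finset.coe_union, Finset.coe_image, Finset.coe_image]
          rw [jf_image, jg_image]
          have e1 : (⇑(jf : E →ₗ[ℝ] E × F × ℝ) '' P : Set (E × F × ℝ)) =
              convexHull ℝ (⇑(jf : E →ₗ[ℝ] E × F × ℝ) '' ↑S) := by
            rw [hPS]; exact LinearMap.image_convexHull _ _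
          have e2 : (⇑(jg : F →ᵃ[ℝ] E × F × ℝ) '' Q' : Set (E × F × ℝ)) =
              convexHull ℝ (⇑(jg : F →ᵃ[ℝ] E × F × ℝ) '' ↑T') := by
            rw [hQ'eq]; exact AffineMap.image_convexHull _ _
          rw [e1, e2, convexHull_convexHull_union_left, convexHull_convexHull_union_right]
      · rw [affineSpan_convexHull]
        intro hmem
        apply huaff
        have h1 : psiaff (E := E) q₀ (jg u) ∈
            (affineSpan ℝ (⇑(jf : E →ₗ[ℝ] E × F × ℝ) '' P ∪
              ⇑(jg : F →ᵃ[ℝ] E × F × ℝ) '' Q')).map (psiaff (E := E) q₀) :=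
          AffineSubspace.mem_map_of_mem _ hmem
        rw [AffineSubspace.map_span] at h1
        have h2 : (⇑(psiaff (E := E) q₀) ''
            (⇑(jf : E →ₗ[ℝ] E × F × ℝ) '' P ∪ ⇑(jg : F →ᵃ[ℝ] E × F × ℝ) '' Q') : Set F)
            ⊆ (affineSpan ℝ Q' : Set F) := by
          rintro _ ⟨z, hz, rfl⟩
          rcases hz with ⟨p, hp, rfl⟩ | ⟨q, hq, rfl⟩
          · have : psiaff (E := E) q₀ (jf p) = q₀ := by
              simp [psiaff, jf_apply]
            rw [this]
            exact subset_affineSpan ℝ Q' hq₀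
          · have : psiaff (E := E) q₀ (jg q) = q := by
              simp [psiaff, jg_apply]
            rw [this]
            exact subset_affineSpan ℝ Q' hq
        have h3 : psiaff (E := E) q₀ (jg u) = u := by simp [psiaff, jg_apply]
        rw [h3] at h1
        exact affineSpan_le.2 h2 h1
      · rw [polyJoin_eq, convexHull_convexHull_union_left, union_assoc]
        have e2 : (⇑(jg : F →ᵃ[ℝ] E × F × ℝ) '' Q : Set (E × F × ℝ)) =
            convexHull ℝ (⇑(jg : F →ᵃ[ℝ] E × F × ℝ) '' Q' ∪ {jg u}) := by
          rw [hQeq, ← image_singleton, ← image_union, ← AffineMap.image_convexHull]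
        rw [e2, convexHull_convexHull_union_right]
end
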